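/- arXiv:1503.02423 — 8 statements merged into one kernel-verified Lean document; each statement's English description precedes it below -/
import Mathlib

section
/- Suppose κ ≤ μ₁ and χ = χ₁⁺ is a successor cardinal with μ₁ = min{μ, χ₁} ≥ κ, and there is a κ-family A ⊆ [χ]^μ of cardinality χ⁺. Then there is a κ-family A' ⊆ [χ₁]^{μ₁} of cardinality χ₁⁺. -/
open Cardinal

universe u

/-- A κ-family: any two distinct members intersect in a set of cardinality < κ. -/
def KappaFamily {α : Type u} (κ : Cardinal) (𝒜 : Set (Set α)) : Prop :=
  ∀ A ∈ 𝒜, ∀ B ∈ 𝒜, A ≠ B → #(↥(A ∩ B)) < κ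

theorem stmt4 {α : Type u} (κ μ χ χ₁ μ₁ : Cardinal.{u})
    (hκ : ℵ₀ ≤ κ) (hκμ : κ ≤ μ) (hμχ : μ ≤ χ) (hsucc : χ = Order.succ χ₁)
    (hμ₁ : μ₁ = min μ χ₁) (hκμ₁ : κ ≤ μ₁) (hα : #α = χ)
    (𝒜 : Set (Set α)) (hsize : ∀ A ∈ 𝒜, #A = μ) (hfam : KappaFamily κ 𝒜)
    (hcard : #𝒜 = Order.succ χ) :
    ∃ (β : Type u), #β = χ₁ ∧ ∃ 𝒜' : Set (Set β),
      (∀ A ∈ 𝒜', #A = μ₁) ∧ KappaFamily κ 𝒜' ∧ #𝒜' = Order.succ χ₁ := by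
  have hμ₁μ : μ₁ ≤ μ := hμ₁ ▸ min_le_left _ _
  have hμ₁χ₁ : μ₁ ≤ χ₁ := hμ₁ ▸ min_le_right _ _
  have hℵχ₁ : ℵ₀ ≤ χ₁ := hκ.trans (hκμ₁.trans hμ₁χ₁)
  have hreg : (Order.succ χ₁).IsRegular := isRegular_succ hℵχ₁
  -- Step 1: shrink each member of the family to size μ₁
  have hshrink : ∀ A : 𝒜, ∃ s : Set α, s ⊆ (A : Set α) ∧ #s = μ₁ := by
    intro A
    have h1 : μ₁ ≤ #(A : Set α) := by rw [hsize A A.2]; exact hμ₁μ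
    obtain ⟨p, hp, hpc⟩ := le_mk_iff_exists_subset.1 h1
    exact ⟨p, hp, hpc⟩
  choose S hSsub hScard using hshrink
  have hSinj : Function.Injective S := by
    intro A B hAB
    by_contra hne
    have hne' : (A : Set α) ≠ (B : Set α) := fun h => hne (Subtype.ext h)
    have hlt : #(↥((A : Set α) ∩ B)) < κ := hfam A A.2 B B.2 hne'
    have : μ₁ ≤ #(↥((A : Set α) ∩ B)) := by
      rw [← hScard A]
      refine Cardinal.mk_le_mk_of_subset (fun x hx => ⟨hSsub A hx, hSsub B ?_⟩)
      rw [← hAB]; exact hx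
    exact absurd (this.trans_lt hlt) (not_lt.2 hκμ₁)
  -- Step 2: transfer to the canonical well-order of type (succ χ₁).ord
  set T : Type u := (Order.succ χ₁).ord.ToType with hT
  haveI : IsWellOrder T (· < ·) := isWellOrder_lt
  have hmkT : #T = Order.succ χ₁ := by rw [hT, Cardinal.mk_toType, Cardinal.card_ord]
  obtain ⟨f⟩ : Nonempty (α ≃ T) := Cardinal.eq.1 (by rw [hα, hsucc, hmkT])
  have htype : Ordinal.type ((· < ·) : T → T → Prop) = (Order.succ χ₁).ord :=
    Ordinal.type_toType _
  -- each shrunken set is bounded in T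
  have hbdd : ∀ A : 𝒜, ∃ t : T, ∀ x ∈ S A, f x < t := by
    intro A
    have hcards : #(↥(f '' S A)) < Ordinal.cof (Ordinal.type ((· < ·) : T → T → Prop)) := by
      rw [Cardinal.mk_image_eq f.injective, hScard A, htype, hreg.cof_eq]
      exact hμ₁χ₁.trans_lt (Order.lt_succ χ₁)
    obtain ⟨t, ht⟩ := not_isCofinal_iff.1 (fun hc => (Order.cof_le hc).not_gt (by rwa [Ordinal.cof_type] at hcards))
    exact ⟨t, fun x hx => ht (f x) ⟨x, hx, rfl⟩⟩
  choose g hg using hbdd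
  -- Step 3: pigeonhole - some fiber of g has size ≥ succ χ₁
  have hpig : ∃ t₀ : T, Order.succ χ₁ ≤ #(g ⁻¹' {t₀}) := by
    by_contra hcon
    push_neg at hcon
    have h1 : #𝒜 ≤ #T * χ₁ := mk_le_mk_mul_of_mk_preimage_le g
      (fun t => Order.lt_succ_iff.1 (hcon t))
    rw [hcard, hmkT, hsucc] at h1
    have h2 : Order.succ χ₁ * χ₁ = Order.succ χ₁ :=
      Cardinal.mul_eq_left (hℵχ₁.trans (Order.le_succ χ₁)) (Order.le_succ χ₁)
        (fun h => (Cardinal.aleph0_pos.trans_le hℵχ₁).ne' h)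
    rw [h2] at h1
    exact absurd h1 (not_le.2 (Order.lt_succ _))
  obtain ⟨t₀, ht₀⟩ := hpig
  obtain ⟨ℬ, hℬsub, hℬcard⟩ := le_mk_iff_exists_subset.1 ht₀
  -- Step 4: the target type β
  have hb1 : Ordinal.typein ((· < ·) : T → T → Prop) t₀ < Ordinal.type ((· < ·) : T → T → Prop) :=
    Ordinal.typein_lt_type _ t₀
  have hb2 : χ₁.ord < Ordinal.type ((· < ·) : T → T → Prop) := by
    rw [htype]; exact Cardinal.ord_lt_ord.2 (Order.lt_succ χ₁)
  set b : Ordinal := max (Ordinal.typein ((· < ·) : T → T → Prop) t₀) χ₁.ord with hbdef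
  have hbtype : b < Ordinal.type ((· < ·) : T → T → Prop) := max_lt hb1 hb2
  set t₁ : T := Ordinal.enum ((· < ·) : T → T → Prop) ⟨b, hbtype⟩ with ht₁
  have htypein_t₁ : Ordinal.typein ((· < ·) : T → T → Prop) t₁ = b := Ordinal.typein_enum _ _
  set β : Type u := ↥{x : T | x < t₁} with hβ
  have hβcard : #β = χ₁ := by
    have h1 : #β = b.card := by
      have h0 := Ordinal.card_typein (r := ((· < ·) : T → T → Prop)) t₁
      rw [htypein_t₁] at h0
      exact h0.symm
    rw [h1, hbdef]
    rcases le_total (Ordinal.typein ((· < ·) : T → T → Prop) t₀) χ₁.ord with h | h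
    · rw [max_eq_right h, Cardinal.card_ord]
    · rw [max_eq_left h]
      have h2 : (Ordinal.typein ((· < ·) : T → T → Prop) t₀).card < Order.succ χ₁ :=
        Cardinal.lt_ord.1 (hb1.trans_eq htype)
      have h3 : (Ordinal.typein ((· < ·) : T → T → Prop) t₀).card ≤ χ₁ := Order.lt_succ_iff.1 h2
      have h4 : χ₁ ≤ (Ordinal.typein ((· < ·) : T → T → Prop) t₀).card := by
        have := Ordinal.card_le_card h
        rwa [Cardinal.card_ord] at this
      exact le_antisymm h3 h4
  refine ⟨β, hβcard, ?_⟩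
  -- the pushed-forward family
  set push : 𝒜 → Set β := fun A => (Subtype.val : β → T) ⁻¹' (f '' S A) with hpush
  -- members of ℬ are bounded by t₀, hence live inside β
  have hrange : ∀ A ∈ ℬ, f '' S A ⊆ Set.range (Subtype.val : β → T) := by
    intro A hA y hy
    obtain ⟨x, hx, rfl⟩ := hy
    have hfib : g A = t₀ := hℬsub hA
    have h1 : f x < t₀ := hfib ▸ hg A x hx
    have h2 : t₀ ≤ t₁ := by
      rw [← not_lt, ← Ordinal.typein_lt_typein ((· < ·) : T → T → Prop), htypein_t₁, not_lt]
      exact le_max_left _ _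
    exact ⟨⟨f x, h1.trans_le h2⟩, rfl⟩
  have hval : ∀ A ∈ ℬ, (Subtype.val : β → T) '' (push A) = f '' S A := by
    intro A hA
    rw [hpush, Set.image_preimage_eq_inter_range,
      Set.inter_eq_left.2 (hrange A hA)]
  have hpushcard : ∀ A ∈ ℬ, #(push A) = μ₁ := by
    intro A hA
    have := Cardinal.mk_image_eq (f := (Subtype.val : β → T)) (s := push A) Subtype.coe_injective
    rw [hval A hA] at this
    rw [← this, Cardinal.mk_image_eq f.injective, hScard A]
  have hpushinj : Set.InjOn push ℬ := by
    intro A hA B hB hAB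
    have h1 : f '' S A = f '' S B := by rw [← hval A hA, ← hval B hB, hAB]
    have h2 : S A = S B := (Set.image_injective.2 f.injective) h1
    exact hSinj h2
  refine ⟨push '' ℬ, ?_, ?_, ?_⟩
  · rintro X ⟨A, hA, rfl⟩
    exact hpushcard A hA
  · rintro X ⟨A, hA, rfl⟩ Y ⟨B, hB, rfl⟩ hXY
    have hABne : A ≠ B := fun h => hXY (by rw [h])
    have hABne' : (A : Set α) ≠ (B : Set α) := fun h => hABne (Subtype.ext h)
    have hsmall : #(↥((A : Set α) ∩ B)) < κ := hfam A A.2 B B.2 hABne'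
    have hsub : push A ∩ push B ⊆ (Subtype.val : β → T) ⁻¹' (f '' ((S A) ∩ (S B))) := by
      rintro ⟨x, hx⟩ ⟨h1, h2⟩
      obtain ⟨a, ha, hfa⟩ := h1
      obtain ⟨a', ha', hfa'⟩ := h2
      have : a = a' := f.injective (hfa.trans hfa'.symm)
      exact ⟨a, ⟨ha, this ▸ ha'⟩, hfa⟩
    calc #(↥(push A ∩ push B)) ≤ #(↥((Subtype.val : β → T) ⁻¹' (f '' ((S A) ∩ (S B))))) :=
          Cardinal.mk_le_mk_of_subset hsub
      _ ≤ #(↥(f '' ((S A) ∩ (S B)))) :=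
          Cardinal.mk_preimage_of_injective _ _ Subtype.coe_injective
      _ = #(↥((S A) ∩ (S B))) := Cardinal.mk_image_eq f.injective
      _ ≤ #(↥((A : Set α) ∩ B)) := Cardinal.mk_le_mk_of_subset
          (fun x hx => ⟨hSsub A hx.1, hSsub B hx.2⟩)
      _ < κ := hsmall
  · rw [Cardinal.mk_image_eq_of_injOn push ℬ hpushinj, hℬcard]
end

section
/- Let A be a (θ,κ)-family, and suppose Y ⊆ A ∪ ⋃A is closed. If δ is a limit ordinal with cf(δ) ≠ cf(κ), and ⟨Z_i : i < δ⟩ is an increasing (under inclusion) sequence of closed subsets of Y, then Z = ⋃_{i<δ} Z_i is closed. -/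
open Cardinal

universe u

lemma key_cof_eq {β : Type u} {κ : Cardinal.{u}} (hκ : ℵ₀ ≤ κ) {δ : Ordinal.{u}}
    (hδ : Order.IsSuccLimit δ) (S : {i : Ordinal.{u} // i < δ} → Set β)
    (hmono : ∀ i j, i ≤ j → S i ⊆ S j)
    (hlt : ∀ i, #(S i) < κ) (hge : κ ≤ #(⋃ i, S i)) :
    δ.cof = κ.ord.cof := by
  obtain ⟨ι, f, hlsub, hcard⟩ := Ordinal.exists_lsub_cof δ
  have hfδ : ∀ j, f j < δ := fun j => hlsub ▸ Ordinal.lt_lsub f j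
  set g : ι → {i : Ordinal.{u} // i < δ} := fun j => ⟨f j, hfδ j⟩ with hg
  have hUnion : (⋃ i, S i) = ⋃ j, S (g j) := by
    apply Set.Subset.antisymm
    · intro v hv
      obtain ⟨i, hi⟩ := Set.mem_iUnion.1 hv
      have : (i : Ordinal) < Ordinal.lsub f := hlsub ▸ i.2
      obtain ⟨j, hj⟩ := Ordinal.lt_lsub_iff.1 this
      exact Set.mem_iUnion.2 ⟨j, hmono i (g j) hj hi⟩
    · exact Set.iUnion_subset fun j => Set.subset_iUnion S (g j)
  have hNEι : Nonempty ι := by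
    rw [← Cardinal.mk_ne_zero_iff, hcard]
    exact (Cardinal.aleph0_pos.trans_le (Ordinal.aleph0_le_cof.2 hδ)).ne'
  have hbdd : BddAbove (Set.range fun j => #(S (g j))) :=
    ⟨κ, by rintro c ⟨j, rfl⟩; exact (hlt (g j)).le⟩
  have hκle : κ ≤ #ι * ⨆ j, #(S (g j)) := by
    calc κ ≤ #(⋃ j, S (g j)) := by rwa [hUnion] at hge
    _ ≤ _ := Cardinal.mk_iUnion_le _
  set μ := ⨆ j, #(S (g j)) with hμ
  have hμκ : μ ≤ κ := ciSup_le' fun j => (hlt (g j)).le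
  by_cases hcase : μ < κ
  · -- then δ.cof = κ, which is regular
    have h1 : κ ≤ #ι := by
      by_contra h
      exact absurd (Cardinal.mul_lt_of_lt hκ (lt_of_not_ge h) hcase) (not_lt.2 hκle)
    -- build an unbounded family of size κ
    obtain ⟨p, hp⟩ := Cardinal.le_mk_iff_exists_set.1 hge
    have hidx : ∀ v : p, ∃ i, (v : ↥(⋃ i, S i)).1 ∈ S i := fun v =>
      Set.mem_iUnion.1 (v : ↥(⋃ i, S i)).2
    choose idx hidx' using hidx
    have hlsubF : Ordinal.lsub.{u,u} (fun v => ((idx v : {i : Ordinal.{u} // i < δ}) : Ordinal)) = δ := by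
      apply le_antisymm (Ordinal.lsub_le fun v => (idx v).2)
      by_contra h
      set i₀ : {i : Ordinal.{u} // i < δ} := ⟨_, lt_of_not_ge h⟩ with hi₀
      have hinj : Function.Injective (fun v : p =>
          (⟨(v : ↥(⋃ i, S i)).1, hmono (idx v) i₀ (Ordinal.lt_lsub _ v).le (hidx' v)⟩ :
            ↥(S i₀))) := by
        intro v w hvw
        simp only [Subtype.mk.injEq] at hvw
        exact Subtype.ext (Subtype.ext hvw)
      have : κ ≤ #(S i₀) := hp ▸ Cardinal.mk_le_of_injective hinj
      exact absurd this (not_le.2 (hlt i₀))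
    have h2 : δ.cof ≤ κ := by
      rw [← hlsubF]
      exact (Ordinal.cof_lsub_le _).trans_eq hp
    have hδκ : δ.cof = κ := le_antisymm h2 (hcard ▸ h1)
    rw [← hδκ, Ordinal.cof_cof]
  · have hμeq : μ = κ := le_antisymm hμκ (le_of_not_gt hcase)
    apply le_antisymm
    · -- δ.cof ≤ κ.ord.cof
      obtain ⟨ι', f', hlsub', hcard'⟩ := Ordinal.exists_lsub_cof κ.ord
      have hκord : Order.IsSuccLimit κ.ord := Cardinal.isSuccLimit_ord hκ
      have hchoice : ∀ j' : ι', ∃ j : ι, (f' j').card < #(S (g j)) := by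
        intro j'
        have h1 : (f' j').card < κ := Cardinal.lt_ord.1 (hlsub' ▸ Ordinal.lt_lsub f' j')
        have : (f' j').card < μ := hμeq ▸ h1
        exact (lt_ciSup_iff hbdd).1 this
      choose h hh using hchoice
      have hlsubF : Ordinal.lsub.{u,u} (fun j' => ((g (h j') : {i : Ordinal.{u} // i < δ}) :
          Ordinal)) = δ := by
        apply le_antisymm (Ordinal.lsub_le fun j' => (g (h j')).2)
        by_contra hcon
        set i₀ : {i : Ordinal.{u} // i < δ} := ⟨_, lt_of_not_ge hcon⟩ with hi₀
        have hb : ∀ j', #(S (g (h j'))) ≤ #(S i₀) := fun j' =>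
          Cardinal.mk_le_mk_of_subset (hmono _ _ (Ordinal.lt_lsub _ j').le)
        have : #(S i₀) < κ := hlt i₀
        have hord : (#(S i₀)).ord < κ.ord := Cardinal.ord_lt_ord.2 this
        obtain ⟨j', hj'⟩ := Ordinal.lt_lsub_iff.1 (hlsub' ▸ hord)
        have : #(S i₀) ≤ (f' j').card := by
          simpa using Ordinal.card_le_card hj'
        exact absurd (this.trans_lt ((hh j').trans_le (hb j'))) (lt_irrefl _)
      rw [← hlsubF]
      exact (Ordinal.cof_lsub_le _).trans_eq hcard'
    · -- κ.ord.cof ≤ δ.cof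
      by_contra hcon
      have : #ι < κ.ord.cof := hcard ▸ lt_of_not_ge hcon
      have := Ordinal.iSup_lt this (fun j => hlt (g j))
      exact absurd (hμeq ▸ this) (lt_irrefl κ)

/-- A (θ,κ)-family. -/
def ThetaKappaFamily {α : Type u} (θ κ : Cardinal) (𝒜 : Set (Set α)) : Prop :=
  (∀ A ∈ 𝒜, #A = θ) ∧ ∀ A ∈ 𝒜, ∀ B ∈ 𝒜, A ≠ B → #(↥(A ∩ B)) < κ

/-- A set of vertices of `G_𝒜` is closed if (1) the intersection of two distinct
members of `𝒜` in it is contained in it, and (2) it contains any `A ∈ 𝒜` meeting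
it in a set of at least κ points. -/
def ClosedVtx {α : Type u} (𝒜 : Set (Set α)) (κ : Cardinal.{u})
    (Y : Set (Set α ⊕ α)) : Prop :=
  (∀ A B : Set α, A ∈ 𝒜 → B ∈ 𝒜 → Sum.inl A ∈ Y → Sum.inl B ∈ Y → A ≠ B →
      ∀ v ∈ A ∩ B, Sum.inr v ∈ Y) ∧
  (∀ A ∈ 𝒜, κ ≤ #({v | v ∈ A ∧ Sum.inr v ∈ Y} : Set α) → Sum.inl A ∈ Y)

theorem stmt5 {α : Type u} (κ θ : Cardinal.{u}) (hκ : ℵ₀ ≤ κ) (hκθ : κ < θ)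
    (𝒜 : Set (Set α)) (hfam : ThetaKappaFamily θ κ 𝒜)
    (Y : Set (Set α ⊕ α)) (hY : ClosedVtx 𝒜 κ Y)
    (δ : Ordinal.{u}) (hδ : Order.IsSuccLimit δ) (hcof : δ.cof ≠ κ.ord.cof)
    (Z : {i : Ordinal // i < δ} → Set (Set α ⊕ α))
    (hZY : ∀ i, Z i ⊆ Y) (hmono : ∀ i j, i ≤ j → Z i ⊆ Z j)
    (hclosed : ∀ i, ClosedVtx 𝒜 κ (Z i)) :
    ClosedVtx 𝒜 κ (⋃ i, Z i) := by
  constructor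
  · intro A B hA hB hAZ hBZ hne v hv
    obtain ⟨i, hi⟩ := Set.mem_iUnion.1 hAZ
    obtain ⟨j, hj⟩ := Set.mem_iUnion.1 hBZ
    exact Set.mem_iUnion.2 ⟨max i j, (hclosed (max i j)).1 A B hA hB
      (hmono i (max i j) (le_max_left i j) hi) (hmono j (max i j) (le_max_right i j) hj)
      hne v hv⟩
  · intro A hA hκA
    by_cases hex : ∃ i, κ ≤ #({v | v ∈ A ∧ Sum.inr v ∈ Z i} : Set α)
    · obtain ⟨i, hi⟩ := hex
      exact Set.mem_iUnion.2 ⟨i, (hclosed i).2 A hA hi⟩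
    · push_neg at hex
      exfalso
      apply hcof
      apply key_cof_eq hκ hδ (fun i => ({v | v ∈ A ∧ Sum.inr v ∈ Z i} : Set α))
      · intro i j hij v hv
        exact ⟨hv.1, hmono i j hij hv.2⟩
      · exact fun i => hex i
      · refine hκA.trans (Cardinal.mk_le_mk_of_subset ?_)
        rintro v ⟨hvA, hvZ⟩
        obtain ⟨i, hi⟩ := Set.mem_iUnion.1 hvZ
        exact Set.mem_iUnion.2 ⟨i, ⟨hvA, hi⟩⟩
end

section
/- Let A be a (θ,κ)-family and let λ be a cardinal with λ^κ = λ and λ ≥ θ. Then every set X of vertices of G_A with |X| = λ is contained in a closed set of vertices of cardinality λ. Moreover, if Y₁ is closed and X ⊆ Y₁ has cardinality λ, then there is a closed Y with X ⊆ Y ⊆ Y₁ and |Y| = λ. -/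
open Cardinal

universe u

/-- The vertex set of `G_𝒜`. -/
def vertexSet {α : Type u} (𝒜 : Set (Set α)) : Set (Set α ⊕ α) :=
  (Sum.inl '' 𝒜) ∪ (Sum.inr '' ⋃₀ 𝒜)

section Aux

variable {α : Type u}

/-- One step of the closure construction. -/
def closStep (𝒜 : Set (Set α)) (κ : Cardinal.{u}) (S : Set (Set α ⊕ α)) : Set (Set α ⊕ α) :=
  S ∪ {x | ∃ v : α, x = Sum.inr v ∧ ∃ A B : Set α, A ∈ 𝒜 ∧ B ∈ 𝒜 ∧ Sum.inl A ∈ S ∧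
        Sum.inl B ∈ S ∧ A ≠ B ∧ v ∈ A ∩ B}
    ∪ {x | ∃ A : Set α, x = Sum.inl A ∧ A ∈ 𝒜 ∧ κ ≤ #({v | v ∈ A ∧ Sum.inr v ∈ S} : Set α)}

/-- Transfinite iteration of the closure step. -/
noncomputable def closIt (𝒜 : Set (Set α)) (κ : Cardinal.{u}) (X : Set (Set α ⊕ α)) :
    Ordinal.{u} → Set (Set α ⊕ α)
  | o => X ∪ ⋃ p : Set.Iio o, closStep 𝒜 κ (closIt 𝒜 κ X p.1)
  termination_by o => o
  decreasing_by exact p.2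

theorem closIt_eq (𝒜 : Set (Set α)) (κ : Cardinal.{u}) (X : Set (Set α ⊕ α)) (o : Ordinal.{u}) :
    closIt 𝒜 κ X o = X ∪ ⋃ p : Set.Iio o, closStep 𝒜 κ (closIt 𝒜 κ X p.1) := by
  rw [closIt]

theorem X_subset_closIt (𝒜 : Set (Set α)) (κ : Cardinal.{u}) (X : Set (Set α ⊕ α))
    (o : Ordinal.{u}) : X ⊆ closIt 𝒜 κ X o := by
  rw [closIt_eq]; exact Set.subset_union_left

theorem step_subset_closIt (𝒜 : Set (Set α)) (κ : Cardinal.{u}) (X : Set (Set α ⊕ α))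
    {p o : Ordinal.{u}} (h : p < o) :
    closStep 𝒜 κ (closIt 𝒜 κ X p) ⊆ closIt 𝒜 κ X o := by
  rw [closIt_eq 𝒜 κ X o]
  refine Set.subset_union_of_subset_right ?_ _
  exact Set.subset_iUnion (fun q : Set.Iio o => closStep 𝒜 κ (closIt 𝒜 κ X q.1)) ⟨p, h⟩

theorem closIt_mono (𝒜 : Set (Set α)) (κ : Cardinal.{u}) (X : Set (Set α ⊕ α))
    {p o : Ordinal.{u}} (h : p ≤ o) : closIt 𝒜 κ X p ⊆ closIt 𝒜 κ X o := by
  rw [closIt_eq 𝒜 κ X p, closIt_eq 𝒜 κ X o]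
  refine Set.union_subset_union_right _ ?_
  exact Set.iUnion_subset fun q => Set.subset_iUnion_of_subset (⟨q.1, lt_of_lt_of_le q.2 h⟩ : Set.Iio o)
    (subset_rfl : closStep 𝒜 κ (closIt 𝒜 κ X q.1) ⊆ _)

theorem mem_closIt_of_limit {𝒜 : Set (Set α)} {κ : Cardinal.{u}} {X : Set (Set α ⊕ α)}
    {o : Ordinal.{u}} (ho : Order.IsSuccLimit o) {x : Set α ⊕ α} (hx : x ∈ closIt 𝒜 κ X o) :
    ∃ p < o, x ∈ closIt 𝒜 κ X p := by
  rw [closIt_eq] at hx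
  rcases hx with hx | hx
  · exact ⟨0, ho.pos, X_subset_closIt _ _ _ _ hx⟩
  · rcases Set.mem_iUnion.1 hx with ⟨⟨p, hp⟩, hx⟩
    exact ⟨p + 1, ho.succ_lt hp, step_subset_closIt _ _ _ (Order.lt_succ p) hx⟩

theorem mk_closStep_le {𝒜 : Set (Set α)} {κ lam : Cardinal.{u}} (hκ : ℵ₀ ≤ κ)
    (hκl : κ ≤ lam) (hl : lam ^ κ = lam)
    (hsmall : ∀ A ∈ 𝒜, ∀ B ∈ 𝒜, A ≠ B → #(↥(A ∩ B)) < κ)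
    (S : Set (Set α ⊕ α)) (hS : #S ≤ lam) : #(closStep 𝒜 κ S) ≤ lam := by
  have hlinf : ℵ₀ ≤ lam := hκ.trans hκl
  set M : Set (Set α ⊕ α) := {x | ∃ v : α, x = Sum.inr v ∧ ∃ A B : Set α, A ∈ 𝒜 ∧ B ∈ 𝒜 ∧
      Sum.inl A ∈ S ∧ Sum.inl B ∈ S ∧ A ≠ B ∧ v ∈ A ∩ B} with hMdef
  set N : Set (Set α ⊕ α) :=
    {x | ∃ A : Set α, x = Sum.inl A ∧ A ∈ 𝒜 ∧ κ ≤ #({v | v ∈ A ∧ Sum.inr v ∈ S} : Set α)}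
    with hNdef
  have hM : #M ≤ lam := by
    set Q : Set (Set α × Set α) :=
      {q | q.1 ∈ 𝒜 ∧ q.2 ∈ 𝒜 ∧ Sum.inl q.1 ∈ S ∧ Sum.inl q.2 ∈ S ∧ q.1 ≠ q.2} with hQdef
    have hQ : #Q ≤ lam := by
      have h1 : #Q ≤ #(S ×ˢ S : Set ((Set α ⊕ α) × (Set α ⊕ α))) := by
        apply mk_le_of_injective (f := fun q =>
          (⟨(Sum.inl q.1.1, Sum.inl q.1.2), q.2.2.2.1, q.2.2.2.2.1⟩ :
            (S ×ˢ S : Set ((Set α ⊕ α) × (Set α ⊕ α)))))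
        intro q q' h
        have h1 := congrArg (fun x => x.1.1) h
        have h2 := congrArg (fun x => x.1.2) h
        simp only [Sum.inl.injEq] at h1 h2
        exact Subtype.ext (Prod.ext h1 h2)
      have h2 : #(S ×ˢ S : Set ((Set α ⊕ α) × (Set α ⊕ α))) = #S * #S := by
        rw [mk_congr (Equiv.Set.prod S S), mk_prod]
        simp
      refine h1.trans ?_
      rw [h2]
      calc #S * #S ≤ lam * lam := mul_le_mul' hS hS
        _ = lam := mul_eq_self hlinf
    have hsub : M ⊆ ⋃ q : Q, Sum.inr '' ((q.1.1 ∩ q.1.2 : Set α)) := by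
      rintro x ⟨v, rfl, A, B, hA, hB, hAS, hBS, hne, hv⟩
      exact Set.mem_iUnion.2 ⟨⟨(A, B), hA, hB, hAS, hBS, hne⟩, v, hv, rfl⟩
    calc #M ≤ #(⋃ q : Q, Sum.inr '' ((q.1.1 ∩ q.1.2 : Set α))) := mk_le_mk_of_subset hsub
      _ ≤ #Q * ⨆ q : Q, #(Sum.inr '' ((q.1.1 ∩ q.1.2 : Set α)) : Set (Set α ⊕ α)) :=
        mk_iUnion_le _
      _ ≤ lam * κ := by
        refine mul_le_mul' hQ (ciSup_le' fun q => ?_)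
        calc #(Sum.inr '' ((q.1.1 ∩ q.1.2 : Set α)) : Set (Set α ⊕ α))
            ≤ #((q.1.1 ∩ q.1.2 : Set α)) := mk_image_le
          _ ≤ κ := (hsmall _ q.2.1 _ q.2.2.1 q.2.2.2.2.2).le
      _ ≤ lam * lam := mul_le_mul' le_rfl hκl
      _ = lam := mul_eq_self hlinf
  have hN : #N ≤ lam := by
    set P : Set α := {v | Sum.inr v ∈ S} with hPdef
    have hP : #P ≤ lam := by
      refine le_trans ?_ hS
      apply mk_le_of_injective (f := fun v => (⟨Sum.inr v.1, v.2⟩ : S))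
      intro v v' h
      have h2 : (Sum.inr v.1 : Set α ⊕ α) = Sum.inr v'.1 := congrArg Subtype.val h
      exact Subtype.ext (Sum.inr.inj h2)
    set NA : Set (Set α) :=
      {A | A ∈ 𝒜 ∧ κ ≤ #({v | v ∈ A ∧ Sum.inr v ∈ S} : Set α)} with hNAdef
    have hNsub : N ⊆ Sum.inl '' NA := by
      rintro x ⟨A, rfl, hA, hcard⟩; exact ⟨A, ⟨hA, hcard⟩, rfl⟩
    have key : #NA ≤ lam := by
      have hemb : ∀ A : NA, κ.out ↪ ({v | v ∈ A.1 ∧ Sum.inr v ∈ S} : Set α) := fun A =>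
        Classical.choice (by rw [← le_def, mk_out]; exact A.2.2)
      have hΦ : Function.Injective
          (fun (A : NA) (i : κ.out) => (⟨(hemb A i).1, (hemb A i).2.2⟩ : P)) := by
        intro A B h
        by_contra hne
        have hABne : A.1 ≠ B.1 := fun hh => hne (Subtype.ext hh)
        have hval : ∀ i, ((hemb A i : α)) = ((hemb B i : α)) := fun i =>
          congrArg Subtype.val (congrFun h i)
        have hRA : Set.range (fun i => ((hemb A i : α))) ⊆ A.1 := by
          rintro _ ⟨i, rfl⟩; exact (hemb A i).2.1
        have hRB : Set.range (fun i => ((hemb A i : α))) ⊆ B.1 := by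
          rintro _ ⟨i, rfl⟩
          show ((hemb A i : α)) ∈ (B.1 : Set α)
          rw [hval i]; exact (hemb B i).2.1
        have hRcard : #(Set.range (fun i => ((hemb A i : α)))) = κ := by
          rw [mk_range_eq _ (fun i j hij => (hemb A).injective (Subtype.val_injective hij))]
          exact mk_out κ
        have hle : κ ≤ #(↥(A.1 ∩ B.1)) :=
          hRcard ▸ mk_le_mk_of_subset (Set.subset_inter hRA hRB)
        exact absurd (hsmall _ A.2.1 _ B.2.1 hABne) (not_lt.2 hle)
      calc #NA ≤ #(κ.out → P) := mk_le_of_injective hΦ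
        _ = #P ^ κ := by rw [← power_def, mk_out]
        _ ≤ lam ^ κ := power_le_power_right hP
        _ = lam := hl
    calc #N ≤ #(Sum.inl '' NA : Set (Set α ⊕ α)) := mk_le_mk_of_subset hNsub
      _ ≤ #NA := mk_image_le
      _ ≤ lam := key
  rw [closStep]
  calc #(↥(S ∪ M ∪ N)) ≤ #(↥(S ∪ M)) + #N := mk_union_le _ _
    _ ≤ #S + #M + #N := add_le_add (mk_union_le _ _) le_rfl
    _ ≤ lam + lam + lam := by gcongr
    _ = lam := by simp [add_eq_self hlinf]

theorem mk_closIt_le {𝒜 : Set (Set α)} {κ lam : Cardinal.{u}} (hκ : ℵ₀ ≤ κ)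
    (hκl : κ ≤ lam) (hl : lam ^ κ = lam)
    (hsmall : ∀ A ∈ 𝒜, ∀ B ∈ 𝒜, A ≠ B → #(↥(A ∩ B)) < κ)
    (X : Set (Set α ⊕ α)) (hX : #X ≤ lam) :
    ∀ o : Ordinal.{u}, o.card ≤ lam → #(closIt 𝒜 κ X o) ≤ lam := by
  have hlinf : ℵ₀ ≤ lam := hκ.trans hκl
  intro o
  induction o using Ordinal.induction with
  | _ o IH =>
    intro ho
    rw [closIt_eq]
    have hre : (⋃ p : Set.Iio o, closStep 𝒜 κ (closIt 𝒜 κ X p.1)) =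
        ⋃ i : o.ToType, closStep 𝒜 κ (closIt 𝒜 κ X (((Ordinal.ToType.mk (o := o)).symm i : Set.Iio o) : Ordinal)) :=
      (Set.iUnion_congr_of_surjective _ (Ordinal.ToType.mk (o := o)).symm.surjective (fun i => rfl)).symm
    have hU : #(⋃ p : Set.Iio o, closStep 𝒜 κ (closIt 𝒜 κ X p.1)) ≤ lam := by
      rw [hre]
      refine le_trans (mk_iUnion_le _) ?_
      have hsup : ⨆ i : o.ToType,
          #(closStep 𝒜 κ (closIt 𝒜 κ X (((Ordinal.ToType.mk (o := o)).symm i : Set.Iio o) : Ordinal))) ≤ lam := by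
        refine ciSup_le' fun i => ?_
        set p := (Ordinal.ToType.mk (o := o)).symm i
        refine mk_closStep_le hκ hκl hl hsmall _ (IH p.1 p.2 ?_)
        exact le_trans (Ordinal.card_le_card p.2.le) ho
      calc #o.ToType * _ ≤ lam * lam := by
            refine mul_le_mul' ?_ hsup
            rw [Cardinal.mk_toType]; exact ho
        _ = lam := mul_eq_self hlinf
    calc #(↥(X ∪ _)) ≤ #X + _ := mk_union_le _ _
      _ ≤ lam + lam := add_le_add hX hU
      _ = lam := add_eq_self hlinf

end Aux

theorem stmt6 {α : Type u} (κ θ lam : Cardinal.{u}) (hκ : ℵ₀ ≤ κ) (hκθ : κ < θ)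
    (hthl : θ ≤ lam) (hl : lam ^ κ = lam)
    (𝒜 : Set (Set α)) (hfam : ThetaKappaFamily θ κ 𝒜) :
    (∀ X : Set (Set α ⊕ α), X ⊆ vertexSet 𝒜 → #X = lam →
      ∃ Y : Set (Set α ⊕ α), X ⊆ Y ∧ Y ⊆ vertexSet 𝒜 ∧ ClosedVtx 𝒜 κ Y ∧ #Y = lam) ∧
    (∀ Y₁ : Set (Set α ⊕ α), Y₁ ⊆ vertexSet 𝒜 → ClosedVtx 𝒜 κ Y₁ →
      ∀ X : Set (Set α ⊕ α), X ⊆ Y₁ → #X = lam →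
      ∃ Y : Set (Set α ⊕ α), X ⊆ Y ∧ Y ⊆ Y₁ ∧ ClosedVtx 𝒜 κ Y ∧ #Y = lam) := by
  obtain ⟨hsizes, hsmall⟩ := hfam
  have hκl : κ ≤ lam := (hκθ.trans_le hthl).le
  have hlinf : ℵ₀ ≤ lam := hκ.trans hκl
  have hsl : Order.succ κ ≤ lam := Order.succ_le_of_lt (hκθ.trans_le hthl)
  set c : Ordinal.{u} := (Order.succ κ).ord with hc
  have hreg : (Order.succ κ).IsRegular := isRegular_succ hκ
  have hclim : Order.IsSuccLimit c := Cardinal.isSuccLimit_ord (hκ.trans (Order.lt_succ κ).le)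
  have main : ∀ Y₁ : Set (Set α ⊕ α), ClosedVtx 𝒜 κ Y₁ →
      ∀ X : Set (Set α ⊕ α), X ⊆ Y₁ → #X = lam →
      ∃ Y : Set (Set α ⊕ α), X ⊆ Y ∧ Y ⊆ Y₁ ∧ ClosedVtx 𝒜 κ Y ∧ #Y = lam := by
    intro Y₁ hY₁ X hXY₁ hX
    set Y := closIt 𝒜 κ X c with hY
    have hXY : X ⊆ Y := X_subset_closIt 𝒜 κ X c
    have hstepY₁ : ∀ S : Set (Set α ⊕ α), S ⊆ Y₁ → closStep 𝒜 κ S ⊆ Y₁ := by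
      intro S hS x hx
      rcases hx with (hx | hx) | hx
      · exact hS hx
      · obtain ⟨v, rfl, A, B, hA, hB, hAS, hBS, hne, hv⟩ := hx
        exact hY₁.1 A B hA hB (hS hAS) (hS hBS) hne v hv
      · obtain ⟨A, rfl, hA, hcard⟩ := hx
        refine hY₁.2 A hA (le_trans hcard (mk_le_mk_of_subset ?_))
        intro v hv; exact ⟨hv.1, hS hv.2⟩
    have hYY₁ : ∀ o : Ordinal.{u}, closIt 𝒜 κ X o ⊆ Y₁ := by
      intro o
      induction o using Ordinal.induction with
      | _ o IH =>
        rw [closIt_eq]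
        exact Set.union_subset hXY₁ (Set.iUnion_subset fun p => hstepY₁ _ (IH p.1 p.2))
    have hclosed : ClosedVtx 𝒜 κ Y := by
      constructor
      · intro A B hA hB hAY hBY hne v hv
        obtain ⟨p, hp, hAp⟩ := mem_closIt_of_limit hclim hAY
        obtain ⟨q, hq, hBq⟩ := mem_closIt_of_limit hclim hBY
        have hAm : Sum.inl A ∈ closIt 𝒜 κ X (max p q) :=
          closIt_mono 𝒜 κ X (le_max_left p q) hAp
        have hBm : Sum.inl B ∈ closIt 𝒜 κ X (max p q) :=
          closIt_mono 𝒜 κ X (le_max_right p q) hBq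
        refine step_subset_closIt 𝒜 κ X (max_lt hp hq) ?_
        exact Or.inl (Or.inr ⟨v, rfl, A, B, hA, hB, hAm, hBm, hne, hv⟩)
      · intro A hA hcard
        obtain ⟨T', hT'sub, hT'⟩ := le_mk_iff_exists_subset.1 hcard
        have hstage : ∀ v : T', ∃ p, p < c ∧ Sum.inr v.1 ∈ closIt 𝒜 κ X p := by
          intro v
          obtain ⟨p, hp, hm⟩ := mem_closIt_of_limit hclim (hT'sub v.2).2
          exact ⟨p, hp, hm⟩
        choose f hf1 hf2 using hstage
        have hT'κ : #T' < c.cof := by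
          rw [hc, hreg.cof_eq, hT']
          exact Order.lt_succ κ
        have hq : (⨆ v, f v) < c := Ordinal.iSup_lt_ord hT'κ hf1
        have hsub : T' ⊆ {v | v ∈ A ∧ Sum.inr v ∈ closIt 𝒜 κ X (⨆ v, f v)} := by
          intro v hv
          refine ⟨(hT'sub hv).1, ?_⟩
          have hfle : f ⟨v, hv⟩ ≤ ⨆ v, f v := le_ciSup (f := f) (Ordinal.bddAbove_range f) ⟨v, hv⟩
          exact closIt_mono 𝒜 κ X hfle (hf2 ⟨v, hv⟩)
        have hκq : κ ≤ #({v | v ∈ A ∧ Sum.inr v ∈ closIt 𝒜 κ X (⨆ v, f v)} : Set α) := by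
          exact le_trans hT'.symm.le (mk_le_mk_of_subset hsub)
        refine step_subset_closIt 𝒜 κ X hq ?_
        exact Or.inr ⟨A, rfl, hA, hκq⟩
    have hYcard : #Y = lam := by
      refine le_antisymm ?_ (hX ▸ mk_le_mk_of_subset hXY)
      refine mk_closIt_le hκ hκl hl hsmall X hX.le c ?_
      rw [hc, Cardinal.card_ord]; exact hsl
    exact ⟨Y, hXY, hYY₁ c, hclosed, hYcard⟩
  constructor
  · intro X hXV hX
    have hVclosed : ClosedVtx 𝒜 κ (vertexSet 𝒜) := by
      constructor
      · intro A B hA hB _ _ _ v hv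
        exact Or.inr ⟨v, ⟨A, hA, hv.1⟩, rfl⟩
      · intro A hA _
        exact Or.inl ⟨A, hA, rfl⟩
    exact main (vertexSet 𝒜) hVclosed X hXV hX
  · intro Y₁ _ hY₁ X hXY₁ hX
    exact main Y₁ hY₁ X hXY₁ hX
end

section
/- The list-chromatic number of the complete bipartite graph K(κ, 2^κ) is greater than κ, for every infinite cardinal κ: there is an assignment of lists of size κ to the vertices of K(κ, 2^κ) admitting no proper coloring from the lists. -/
open Cardinal

universe u

theorem stmt8 (κ : Cardinal.{u}) (hκ : ℵ₀ ≤ κ)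
    (A B : Type u) (hA : #A = κ) (hB : #B = 2 ^ κ) :
    ∃ (C : Type u) (L : (A ⊕ B) → Set C), (∀ x, #(L x) = κ) ∧
      ¬ ∃ c : (A ⊕ B) → C, (∀ x, c x ∈ L x) ∧
          ∀ (a : A) (b : B), c (Sum.inl a) ≠ c (Sum.inr b) := by
  have hAB : #(A → A) = #B := by
    rw [hB, ← hA, ← Cardinal.power_self_eq (hA ▸ hκ), Cardinal.power_def]
  obtain ⟨e⟩ := Cardinal.eq.1 hAB
  refine ⟨A × A,
    Sum.elim (fun a => Set.range (fun x => (a, x)))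
      (fun b => Set.range (fun a => (a, e.symm b a))), ?_, ?_⟩
  · rintro (a | b)
    · simp only [Sum.elim_inl]
      rw [Cardinal.mk_range_eq _ (fun x y h => congrArg Prod.snd h), hA]
    · simp only [Sum.elim_inr]
      rw [Cardinal.mk_range_eq _ (fun x y h => congrArg Prod.fst h), hA]
  · rintro ⟨c, hc, hproper⟩
    set g : A → A := fun a => (c (Sum.inl a)).2 with hg
    have hfst : ∀ a, (c (Sum.inl a)).1 = a := by
      intro a
      obtain ⟨x, hx⟩ := hc (Sum.inl a)
      rw [← hx]
    have hcl : ∀ a, c (Sum.inl a) = (a, g a) := fun a => Prod.ext (hfst a) rfl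
    obtain ⟨a, ha⟩ := hc (Sum.inr (e g))
    apply hproper a (e g)
    rw [hcl a, ← ha, e.symm_apply_apply]
end

section
/- Let λ > θ be regular cardinals and suppose there exist a stationary set S ⊆ {δ < λ : cf(δ) = θ} and sets C_δ ⊆ δ with otp(C_δ) = θ for δ ∈ S, such that for every u ∈ [λ]^κ the set {δ ∈ S : u ⊆ C_δ} is bounded in λ. Then for every cardinal ∂ with κ ≤ ∂ < θ there exist μ < λ and a family A ⊆ [μ]^∂ of cardinality λ such that for every u ∈ [μ]^κ, fewer than λ members v of A satisfy u ⊆ v. -/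
open Cardinal Ordinal

universe u

/-- A club subset of (the ordinals below) `Λ`: closed and unbounded. -/
def IsClubIn (C : Set Ordinal.{u}) (Λ : Ordinal.{u}) : Prop :=
  C ⊆ Set.Iio Λ ∧
  (∀ a < Λ, ∃ b ∈ C, a ≤ b) ∧
  (∀ s : Set Ordinal.{u}, s ⊆ C → s.Nonempty → sSup s < Λ → sSup s ∈ C)

/-- A stationary subset of `Λ`: meets every club. -/
def IsStationaryIn (S : Set Ordinal.{u}) (Λ : Ordinal.{u}) : Prop :=
  S ⊆ Set.Iio Λ ∧ ∀ C : Set Ordinal.{u}, IsClubIn C Λ → (S ∩ C).Nonempty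

namespace Stmt11Aux

/-- The lift of a regular cardinal is regular. -/
lemma isRegular_lift {c : Cardinal.{u}} (h : c.IsRegular) :
    (Cardinal.lift.{v} c).IsRegular := by
  constructor
  · exact Cardinal.aleph0_le_lift.mpr h.1
  · rw [← Cardinal.lift_ord, ← Ordinal.lift_cof, h.cof_eq]

/-- A set of ordinals below `lam.ord` of cardinality `< lam` has supremum `< lam.ord`. -/
lemma sSup_lt_of_card_lt {lam : Cardinal.{u}} (hlreg : lam.IsRegular)
    {s : Set Ordinal.{u}} (hsub : s ⊆ Set.Iio lam.ord)
    (hcard : #s < Cardinal.lift.{u+1} lam) : sSup s < lam.ord := by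
  rcases s.eq_empty_or_nonempty with rfl | hne
  · rw [csSup_empty]
    exact (Cardinal.isSuccLimit_ord hlreg.1).pos
  · have hsmall : Small.{u} s := small_subset hsub
    have hrange : Set.range (fun i : Shrink.{u} s => ((equivShrink s).symm i).1) = s := by
      ext x
      constructor
      · rintro ⟨i, rfl⟩; exact ((equivShrink s).symm i).2
      · intro hx; exact ⟨equivShrink s ⟨x, hx⟩, by simp⟩
    have heq : sSup s = ⨆ i : Shrink.{u} s, ((equivShrink s).symm i).1 := by
      rw [iSup, hrange]
    rw [heq]
    apply Ordinal.iSup_lt_ord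
    · rw [hlreg.cof_eq, ← Cardinal.lift_lt.{_, u+1}, Cardinal.lift_mk_shrink''.{u+1, u}]
      exact hcard
    · intro i; exact hsub ((equivShrink s).symm i).2

/-- The set of closure points of a function `h : Ordinal → Iio lam.ord` is club in `lam.ord`. -/
lemma isClubIn_closurePoints {lam : Cardinal.{u}} (hlreg : lam.IsRegular) (hlab : ℵ₀ < lam)
    (h : Ordinal.{u} → Ordinal.{u}) (hh : ∀ γ, h γ < lam.ord) :
    IsClubIn {α | α < lam.ord ∧ ∀ γ < α, h γ < α} lam.ord := by
  have hlim : 0 < lam.ord ∧ ∀ b < lam.ord, b + 1 < lam.ord :=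
    ⟨(Cardinal.isSuccLimit_ord hlreg.1).pos, fun b hb => by
      rw [Ordinal.add_one_eq_succ]; exact (Cardinal.isSuccLimit_ord hlreg.1).succ_lt hb⟩
  refine ⟨fun α hα => hα.1, ?_, ?_⟩
  · -- unbounded
    intro a ha
    set F : Ordinal.{u} → Ordinal.{u} :=
      fun b => max (b + 1) (sSup ((fun γ => h γ + 1) '' Set.Iic b)) with hF
    have hFlt : ∀ b < lam.ord, F b < lam.ord := by
      intro b hb
      apply max_lt (hlim.2 b hb)
      apply sSup_lt_of_card_lt hlreg
      · rintro x ⟨γ, _, rfl⟩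
        exact hlim.2 _ (hh γ)
      · refine lt_of_le_of_lt Cardinal.mk_image_le ?_
        have : (Set.Iic b : Set Ordinal.{u}) = Set.Iio (b + 1) := by
          ext x
          simp only [Set.mem_Iic, Set.mem_Iio, Ordinal.add_one_eq_succ, Order.lt_succ_iff]
        rw [this, Ordinal.mk_Iio_ordinal, Cardinal.lift_lt]
        exact Cardinal.lt_ord.mp (hlim.2 b hb)
    have hFgt : ∀ b, b < F b := fun b =>
      lt_of_lt_of_le (by rw [Ordinal.add_one_eq_succ]; exact Order.lt_succ b) (le_max_left _ _)
    have hFh : ∀ γ b, γ ≤ b → b < lam.ord → h γ < F b := by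
      intro γ b hγb hb
      have h1 : h γ + 1 ≤ sSup ((fun γ => h γ + 1) '' Set.Iic b) := by
        apply le_csSup
        · refine ⟨lam.ord, ?_⟩
          rintro x ⟨γ', _, rfl⟩
          exact le_of_lt (hlim.2 _ (hh γ'))
        · exact ⟨γ, hγb, rfl⟩
      calc h γ < h γ + 1 := by
            rw [Ordinal.add_one_eq_succ]; exact Order.lt_succ _
        _ ≤ _ := h1.trans (le_max_right _ _)
    set b : ℕ → Ordinal.{u} := fun n => F^[n] a with hb
    have hblt : ∀ n, b n < lam.ord := by
      intro n
      induction n with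
      | zero => exact ha
      | succ n ih =>
        have : b (n + 1) = F (b n) := Function.iterate_succ_apply' F n a
        rw [this]; exact hFlt _ ih
    have hbdd : BddAbove (Set.range b) := by
      refine ⟨lam.ord, ?_⟩
      rintro x ⟨n, rfl⟩
      exact le_of_lt (hblt n)
    have hne : (Set.range b).Nonempty := ⟨b 0, ⟨0, rfl⟩⟩
    have hBlt : sSup (Set.range b) < lam.ord := by
      apply sSup_lt_of_card_lt hlreg
      · rintro x ⟨n, rfl⟩; exact hblt n
      · refine lt_of_le_of_lt (Set.Countable.le_aleph0 (Set.countable_range b)) ?_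
        rw [← Cardinal.lift_aleph0.{u+1, u}]
        exact Cardinal.lift_lt.mpr hlab
    refine ⟨sSup (Set.range b), ⟨hBlt, ?_⟩, ?_⟩
    · intro γ hγ
      obtain ⟨x, ⟨n, rfl⟩, hγx⟩ := exists_lt_of_lt_csSup hne hγ
      have hstep : h γ < b (n + 1) := by
        have : b (n + 1) = F (b n) := Function.iterate_succ_apply' F n a
        rw [this]
        exact hFh γ (b n) (le_of_lt hγx) (hblt n)
      exact lt_of_lt_of_le hstep (le_csSup hbdd ⟨n + 1, rfl⟩)
    · exact le_csSup hbdd ⟨0, rfl⟩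
  · -- closed
    intro s hs hne hsup
    refine ⟨hsup, fun γ hγ => ?_⟩
    obtain ⟨α, hα, hγα⟩ := exists_lt_of_lt_csSup hne hγ
    have : h γ < α := (hs hα).2 γ hγα
    exact lt_of_lt_of_le this (le_csSup ⟨lam.ord, fun x hx => le_of_lt (hs hx).1⟩ hα)

/-- Fodor-light: a regressive function on a stationary set has an unbounded fiber. -/
lemma fodor_light {lam : Cardinal.{u}} (hlreg : lam.IsRegular) (hlab : ℵ₀ < lam)
    {S : Set Ordinal.{u}} (hS : IsStationaryIn S lam.ord)
    (g : Ordinal.{u} → Ordinal.{u}) (hg : ∀ δ ∈ S, g δ < δ) :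
    ∃ γ, ∀ β < lam.ord, ∃ δ ∈ S, g δ = γ ∧ β ≤ δ := by
  by_contra hcon
  push_neg at hcon
  choose h hh1 hh2 using hcon
  obtain ⟨δ, hδS, hδD⟩ := hS.2 _ (isClubIn_closurePoints hlreg hlab h hh1)
  have h1 : δ < h (g δ) := hh2 (g δ) δ hδS rfl
  have h2 : h (g δ) < δ := hδD.2 (g δ) (hg δ hδS)
  exact absurd h1 (not_lt_of_gt h2)

/-- From the order type hypothesis, extract a subset of `C δ` of size `d` with small sup. -/
lemma exists_v {θ d : Cardinal.{u}} (hd : d < θ) (hd0 : ℵ₀ ≤ d)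
    {δ : Ordinal.{u}} {Cδ : Set Ordinal.{u}} (hsub : Cδ ⊆ Set.Iio δ)
    (htype : Ordinal.type ((· < ·) : ↥Cδ → ↥Cδ → Prop) = Ordinal.lift.{u+1} θ.ord) :
    ∃ w : Set Ordinal.{u}, w ⊆ Cδ ∧ #w = Cardinal.lift.{u+1} d ∧ w.Nonempty ∧ sSup w < δ := by
  set r : ↥Cδ → ↥Cδ → Prop := (· < ·) with hr
  have hlt : Ordinal.lift.{u+1} d.ord < Ordinal.type r := by
    rw [htype]
    exact Ordinal.lift_lt.mpr (Cardinal.ord_lt_ord.mpr hd)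
  set x : ↥Cδ := Ordinal.enum r ⟨Ordinal.lift.{u+1} d.ord, hlt⟩ with hx
  have hcard : #({z : ↥Cδ | z < x}) = Cardinal.lift.{u+1} d := by
    have h1 : #({z : ↥Cδ | z < x}) = #{y : ↥Cδ // r y x} := rfl
    rw [h1, ← Ordinal.card_typein, hx, Ordinal.typein_enum, ← Ordinal.lift_card,
      Cardinal.card_ord]
  have hcard' : #(Subtype.val '' {z : ↥Cδ | z < x}) = Cardinal.lift.{u+1} d := by
    rw [Cardinal.mk_image_eq Subtype.val_injective, hcard]
  have hne : (Subtype.val '' {z : ↥Cδ | z < x}).Nonempty := by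
    rw [← Set.nonempty_coe_sort, ← Cardinal.mk_ne_zero_iff, hcard']
    simp only [ne_eq, Cardinal.lift_eq_zero]
    exact fun h => Cardinal.aleph0_ne_zero (le_antisymm (h ▸ hd0) (Cardinal.zero_le _))
  refine ⟨Subtype.val '' {z : ↥Cδ | z < x}, ?_, hcard', hne, ?_⟩
  · rintro y ⟨z, _, rfl⟩
    exact z.2
  · have hub : sSup (Subtype.val '' {z : ↥Cδ | z < x}) ≤ (x : Ordinal) := by
      apply csSup_le hne
      rintro y ⟨z, hz, rfl⟩
      exact le_of_lt hz
    exact lt_of_le_of_lt hub (hsub x.2)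

end Stmt11Aux

theorem stmt11 (κ θ lam : Cardinal.{u})
    (hκ : ℵ₀ ≤ κ) (hκθ : κ < θ) (hθl : θ < lam)
    (hθreg : θ.IsRegular) (hlreg : lam.IsRegular)
    (S : Set Ordinal.{u}) (hS : IsStationaryIn S lam.ord)
    (hScof : ∀ δ ∈ S, δ.cof = θ)
    (C : Ordinal.{u} → Set Ordinal.{u})
    (hCsub : ∀ δ ∈ S, C δ ⊆ Set.Iio δ)
    (hCotp : ∀ δ ∈ S, Ordinal.type ((· < ·) : ↥(C δ) → ↥(C δ) → Prop) = Ordinal.lift.{u+1} θ.ord)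
    (hbdd : ∀ u : Set Ordinal.{u}, u ⊆ Set.Iio lam.ord → #u = Cardinal.lift.{u+1} κ →
      ∃ β < lam.ord, ∀ δ ∈ S, u ⊆ C δ → δ ≤ β) :
    ∀ d : Cardinal.{u}, κ ≤ d → d < θ →
      ∃ μ < lam, ∃ 𝒜 : Set (Set Ordinal.{u}),
        (∀ v ∈ 𝒜, v ⊆ Set.Iio μ.ord ∧ #v = Cardinal.lift.{u+1} d) ∧ #𝒜 = Cardinal.lift.{u+1} lam ∧
        ∀ u : Set Ordinal.{u}, u ⊆ Set.Iio μ.ord → #u = Cardinal.lift.{u+1} κ →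
          #{v | v ∈ 𝒜 ∧ u ⊆ v} < Cardinal.lift.{u+1} lam := by
  intro d hκd hdθ
  have hd0 : ℵ₀ ≤ d := hκ.trans hκd
  have hlab : ℵ₀ < lam := lt_of_le_of_lt (hκ.trans hκd) (hdθ.trans hθl)
  have hlim : 0 < lam.ord ∧ ∀ b < lam.ord, b + 1 < lam.ord :=
    ⟨(Cardinal.isSuccLimit_ord hlreg.1).pos, fun b hb => by
      rw [Ordinal.add_one_eq_succ]; exact (Cardinal.isSuccLimit_ord hlreg.1).succ_lt hb⟩
  -- choose the small approximations v δ ⊆ C δ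
  have hex : ∀ δ ∈ S, ∃ w : Set Ordinal.{u},
      w ⊆ C δ ∧ #w = Cardinal.lift.{u+1} d ∧ w.Nonempty ∧ sSup w < δ :=
    fun δ hδ => Stmt11Aux.exists_v hdθ hd0 (hCsub δ hδ) (hCotp δ hδ)
  choose! v hv1 hv2 hv3 hv4 using hex
  -- Fodor-light
  obtain ⟨γ, hγ⟩ := Stmt11Aux.fodor_light hlreg hlab hS (fun δ => sSup (v δ)) hv4
  set S' : Set Ordinal.{u} := {δ | δ ∈ S ∧ sSup (v δ) = γ} with hS'def
  have hS'sub : S' ⊆ Set.Iio lam.ord := fun δ hδ => hS.1 hδ.1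
  obtain ⟨δ₀, hδ₀S, hδ₀γ, -⟩ := hγ 0 hlim.1
  have hδ₀S' : δ₀ ∈ S' := ⟨hδ₀S, hδ₀γ⟩
  have hγlt : γ < lam.ord := by
    rw [← hδ₀γ]
    exact lt_trans (hv4 δ₀ hδ₀S) (hS.1 hδ₀S)
  have hγ1lt : γ + 1 < lam.ord := hlim.2 γ hγlt
  -- each v δ (δ ∈ S') is contained in Iio (γ+1)
  have hvsub' : ∀ δ ∈ S', v δ ⊆ Set.Iio (γ + 1) := by
    intro δ hδ y hy
    have hbdd0 : BddAbove (v δ) :=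
      ⟨δ, fun z hz => le_of_lt (hCsub δ hδ.1 (hv1 δ hδ.1 hz))⟩
    have : y ≤ γ := by
      rw [← hδ.2]
      exact le_csSup hbdd0 hy
    exact lt_of_le_of_lt this (by rw [Ordinal.add_one_eq_succ]; exact Order.lt_succ γ)
  -- the cardinal μ
  set μ : Cardinal.{u} := (γ + 1).card with hμdef
  have hμlam : μ < lam := Cardinal.lt_ord.mp hγ1lt
  have hdμ : Cardinal.lift.{u+1} d ≤ Cardinal.lift.{u+1} μ := by
    rw [← hv2 δ₀ hδ₀S, ← Ordinal.mk_Iio_ordinal]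
    exact Cardinal.mk_le_mk_of_subset (hvsub' δ₀ hδ₀S')
  -- the transfer bijection
  have hiio : #(↥(Set.Iio (γ + 1))) = #(↥(Set.Iio μ.ord)) := by
    rw [Ordinal.mk_Iio_ordinal, Ordinal.mk_Iio_ordinal, Cardinal.card_ord]
  obtain ⟨e⟩ := Cardinal.eq.mp hiio
  set f : Ordinal.{u} → Ordinal.{u} :=
    fun a => if h : a ∈ Set.Iio (γ + 1) then (e ⟨a, h⟩ : Ordinal.{u}) else 0 with hfdef
  have hfval : ∀ a (h : a ∈ Set.Iio (γ + 1)), f a = (e ⟨a, h⟩ : Ordinal.{u}) := by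
    intro a h; simp only [hfdef, dif_pos h]
  have hfmaps : ∀ a ∈ Set.Iio (γ + 1), f a ∈ Set.Iio μ.ord := by
    intro a h; rw [hfval a h]; exact (e ⟨a, h⟩).2
  have hfinj : Set.InjOn f (Set.Iio (γ + 1)) := by
    intro a ha b hb hab
    rw [hfval a ha, hfval b hb] at hab
    have := e.injective (Subtype.ext hab)
    exact congrArg Subtype.val this
  have hfsurj : ∀ b ∈ Set.Iio μ.ord, ∃ a ∈ Set.Iio (γ + 1), f a = b := by
    intro b hb
    refine ⟨(e.symm ⟨b, hb⟩ : Ordinal.{u}), (e.symm ⟨b, hb⟩).2, ?_⟩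
    rw [hfval _ (e.symm ⟨b, hb⟩).2]
    have : (⟨(e.symm ⟨b, hb⟩ : Ordinal.{u}), (e.symm ⟨b, hb⟩).2⟩ : ↥(Set.Iio (γ + 1)))
        = e.symm ⟨b, hb⟩ := Subtype.ext rfl
    rw [this, e.apply_symm_apply]
  -- preimage construction
  have hpre : ∀ u : Set Ordinal.{u}, u ⊆ Set.Iio μ.ord →
      f '' {a | a ∈ Set.Iio (γ + 1) ∧ f a ∈ u} = u := by
    intro u hu
    apply Set.Subset.antisymm
    · rintro y ⟨a, ⟨_, ha2⟩, rfl⟩; exact ha2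
    · intro y hy
      obtain ⟨a, ha, rfl⟩ := hfsurj y (hu hy)
      exact ⟨a, ⟨ha, hy⟩, rfl⟩
  have hprecard : ∀ u : Set Ordinal.{u}, u ⊆ Set.Iio μ.ord →
      #({a | a ∈ Set.Iio (γ + 1) ∧ f a ∈ u}) = #u := by
    intro u hu
    have hm : Set.InjOn f {a | a ∈ Set.Iio (γ + 1) ∧ f a ∈ u} := by
      apply hfinj.mono
      intro a ha
      exact ha.1
    have himg := Cardinal.mk_image_eq_of_injOn f _ hm
    rw [hpre u hu] at himg
    exact himg.symm
  have hpresub : ∀ u : Set Ordinal.{u},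
      {a | a ∈ Set.Iio (γ + 1) ∧ f a ∈ u} ⊆ Set.Iio lam.ord := by
    intro u a ha
    exact lt_trans ha.1 hγ1lt
  -- if u ⊆ f '' v δ then the preimage of u is contained in v δ
  have hsubv : ∀ δ ∈ S', ∀ u : Set Ordinal.{u}, u ⊆ f '' v δ →
      {a | a ∈ Set.Iio (γ + 1) ∧ f a ∈ u} ⊆ v δ := by
    intro δ hδ u huv a ha
    obtain ⟨a', ha', heq⟩ := huv ha.2
    rwa [hfinj ha.1 (hvsub' δ hδ ha') heq.symm]
  -- counting sets Iic β
  have hIic : ∀ β : Ordinal.{u}, β < lam.ord →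
      #(Set.Iic β : Set Ordinal.{u}) < Cardinal.lift.{u+1} lam := by
    intro β hβ
    have h1 : (Set.Iic β : Set Ordinal.{u}) = Set.Iio (β + 1) := by
      ext a; simp only [Set.mem_Iic, Set.mem_Iio, Ordinal.add_one_eq_succ, Order.lt_succ_iff]
    rw [h1, Ordinal.mk_Iio_ordinal, Cardinal.lift_lt]
    exact Cardinal.lt_ord.mp (hlim.2 β hβ)
  -- S' has cardinality at least lam
  have hS'card : Cardinal.lift.{u+1} lam ≤ #S' := by
    by_contra hcon
    push_neg at hcon
    have hsup := Stmt11Aux.sSup_lt_of_card_lt hlreg hS'sub hcon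
    obtain ⟨δ, hδS, hδγ, hδge⟩ := hγ (sSup S' + 1) (hlim.2 _ hsup)
    have hle : δ ≤ sSup S' :=
      le_csSup ⟨lam.ord, fun x hx => le_of_lt (hS'sub hx)⟩ (⟨hδS, hδγ⟩ : δ ∈ S')
    have : sSup S' + 1 ≤ sSup S' := hδge.trans hle
    have h2 : sSup S' < sSup S' + 1 := by
      rw [Ordinal.add_one_eq_succ]; exact Order.lt_succ _
    exact absurd this (not_le_of_gt h2)
  -- the family
  set 𝒜 : Set (Set Ordinal.{u}) := (fun δ => f '' v δ) '' S' with h𝒜def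
  have hA1 : ∀ w ∈ 𝒜, w ⊆ Set.Iio μ.ord ∧ #w = Cardinal.lift.{u+1} d := by
    rintro w ⟨δ, hδ, rfl⟩
    constructor
    · rintro y ⟨a, ha, rfl⟩
      exact hfmaps a (hvsub' δ hδ ha)
    · rw [Cardinal.mk_image_eq_of_injOn f _ (hfinj.mono (hvsub' δ hδ))]
      exact hv2 δ hδ.1
  refine ⟨μ, hμlam, 𝒜, hA1, ?_, ?_⟩
  · -- #𝒜 = lift lam
    refine le_antisymm ?_ ?_
    · refine le_trans Cardinal.mk_image_le ?_
      refine le_trans (Cardinal.mk_le_mk_of_subset hS'sub) ?_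
      rw [Ordinal.mk_Iio_ordinal, Cardinal.card_ord]
    · by_contra hcon
      push_neg at hcon
      have hchoose : ∀ w : ↥𝒜, ∃ p : Set Ordinal.{u}, p ⊆ w.1 ∧ #p = Cardinal.lift.{u+1} κ := by
        intro w
        apply Cardinal.le_mk_iff_exists_subset.mp
        rw [(hA1 w.1 w.2).2]
        exact Cardinal.lift_le.mpr hκd
      choose p hp1 hp2 using hchoose
      have hqcard : ∀ w : ↥𝒜,
          #({a | a ∈ Set.Iio (γ + 1) ∧ f a ∈ p w}) = Cardinal.lift.{u+1} κ := by
        intro w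
        rw [hprecard (p w) ((hp1 w).trans (hA1 w.1 w.2).1)]
        exact hp2 w
      have hbd : ∀ w : ↥𝒜, ∃ β < lam.ord, ∀ δ ∈ S,
          {a | a ∈ Set.Iio (γ + 1) ∧ f a ∈ p w} ⊆ C δ → δ ≤ β :=
        fun w => hbdd _ (hpresub (p w)) (hqcard w)
      choose β hβ1 hβ2 using hbd
      have hcover : S' ⊆ ⋃ w : ↥𝒜, Set.Iic (β w) := by
        intro δ hδ
        have hw : f '' v δ ∈ 𝒜 := ⟨δ, hδ, rfl⟩
        set w : ↥𝒜 := ⟨f '' v δ, hw⟩ with hwdef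
        have hqv : {a | a ∈ Set.Iio (γ + 1) ∧ f a ∈ p w} ⊆ v δ :=
          hsubv δ hδ (p w) (hp1 w)
        have : δ ≤ β w := hβ2 w δ hδ.1 (hqv.trans (hv1 δ hδ.1))
        exact Set.mem_iUnion.mpr ⟨w, this⟩
      have h1 : #S' ≤ Cardinal.sum (fun w : ↥𝒜 => #(Set.Iic (β w) : Set Ordinal.{u})) :=
        le_trans (Cardinal.mk_le_mk_of_subset hcover) Cardinal.mk_iUnion_le_sum_mk
      have h2 : Cardinal.sum (fun w : ↥𝒜 => #(Set.Iic (β w) : Set Ordinal.{u}))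
          < Cardinal.lift.{u+1} lam :=
        Cardinal.sum_lt_of_isRegular (Stmt11Aux.isRegular_lift hlreg) hcon
          (fun w => hIic (β w) (hβ1 w))
      exact absurd hS'card (not_le_of_gt (lt_of_le_of_lt h1 h2))
  · -- the counting condition
    intro u hu hucard
    have hu'card : #({a | a ∈ Set.Iio (γ + 1) ∧ f a ∈ u}) = Cardinal.lift.{u+1} κ := by
      rw [hprecard u hu]; exact hucard
    obtain ⟨β, hβ, hβ2⟩ := hbdd _ (hpresub u) hu'card
    have hsub2 : {w | w ∈ 𝒜 ∧ u ⊆ w} ⊆ (fun δ => f '' v δ) '' {δ | δ ∈ S' ∧ δ ≤ β} := by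
      rintro w ⟨⟨δ, hδ, rfl⟩, huw⟩
      have hin : {a | a ∈ Set.Iio (γ + 1) ∧ f a ∈ u} ⊆ v δ := hsubv δ hδ u huw
      exact ⟨δ, ⟨hδ, hβ2 δ hδ.1 (hin.trans (hv1 δ hδ.1))⟩, rfl⟩
    calc #({w | w ∈ 𝒜 ∧ u ⊆ w}) ≤ #({δ | δ ∈ S' ∧ δ ≤ β}) :=
          le_trans (Cardinal.mk_le_mk_of_subset hsub2) Cardinal.mk_image_le
      _ ≤ #(Set.Iic β : Set Ordinal.{u}) :=
          Cardinal.mk_le_mk_of_subset (fun δ hδ => hδ.2)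
      _ < Cardinal.lift.{u+1} lam := hIic β hβ
end

section
/- Let κ < θ < λ be infinite cardinals with λ regular, and assume ∂^κ < λ for all ∂ < θ. Suppose for some μ < λ and some ∂ ∈ [κ, θ) there is a family A ⊆ [μ]^∂ of cardinality λ such that every u ∈ [μ]^κ is contained in fewer than λ members of A. Then there is a family A' ⊆ [μ]^∂ of cardinality λ which is a κ-family, i.e., |u ∩ v| < κ for all distinct u, v ∈ A'. -/
open Cardinal

universe u

theorem stmt12 {α : Type u} (κ θ lam μ d : Cardinal.{u})
    (hκ : ℵ₀ ≤ κ) (hκθ : κ < θ) (hθl : θ < lam) (hlreg : lam.IsRegular)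
    (hpow : ∀ c < θ, c ^ κ < lam)
    (hμ : μ < lam) (hα : #α = μ) (hd1 : κ ≤ d) (hd2 : d < θ)
    (𝒜 : Set (Set α)) (hsize : ∀ A ∈ 𝒜, #A = d) (hcard : #𝒜 = lam)
    (hfew : ∀ u : Set α, #u = κ → #{v | v ∈ 𝒜 ∧ u ⊆ v} < lam) :
    ∃ 𝒜' : Set (Set α), (∀ A ∈ 𝒜', #A = d) ∧ #𝒜' = lam ∧ KappaFamily κ 𝒜' := by
  classical
  set β := lam.ord.ToType with hβ
  have hβc : #β = lam := mk_ord_toType lam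
  set Bad : Set α → Set (Set α) := fun A => {B | B ∈ 𝒜 ∧ κ ≤ #(↥(A ∩ B))} with hBadDef
  have hself : ∀ A ∈ 𝒜, A ∈ Bad A := by
    intro A hA
    refine ⟨hA, ?_⟩
    rw [Set.inter_self, hsize A hA]
    exact hd1
  have hBadlt : ∀ A ∈ 𝒜, #(Bad A) < lam := by
    intro A hA
    set T : Set (Set α) := {u | u ⊆ A ∧ #u = κ} with hT
    have hTcard : #T < lam := by
      have h1 : #T ≤ #{u : Set α | u ⊆ A ∧ #u ≤ κ} :=
        mk_le_mk_of_subset (fun u hu => ⟨hu.1, hu.2.le⟩)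
      have h2 : #{u : Set α | u ⊆ A ∧ #u ≤ κ} ≤ max #A ℵ₀ ^ κ :=
        mk_bounded_subset_le A κ
      have h3 : max #A ℵ₀ = d := by
        rw [hsize A hA]
        exact max_eq_left (hκ.trans hd1)
      refine lt_of_le_of_lt (h1.trans h2) ?_
      rw [h3]
      exact hpow d hd2
    have hsub : Bad A ⊆ ⋃ u ∈ T, {v | v ∈ 𝒜 ∧ u ⊆ v} := by
      rintro B ⟨hB, hκB⟩
      obtain ⟨u, hu, huκ⟩ := le_mk_iff_exists_subset.1 hκB
      exact Set.mem_biUnion ⟨hu.trans Set.inter_subset_left, huκ⟩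
        ⟨hB, hu.trans Set.inter_subset_right⟩
    calc #(Bad A) ≤ #(⋃ u ∈ T, {v | v ∈ 𝒜 ∧ u ⊆ v}) := mk_le_mk_of_subset hsub
      _ ≤ #T * ⨆ u : T, #{v | v ∈ 𝒜 ∧ (u : Set α) ⊆ v} := mk_biUnion_le _ _
      _ < lam := mul_lt_of_lt hlreg.aleph0_le hTcard
          (iSup_lt_of_isRegular hlreg hTcard fun u => hfew u.1 u.2.2)
  -- key nonemptiness lemma for the recursion
  have key : ∀ (a : β) (g : ∀ b, b < a → Set α), (∀ b (hb : b < a), g b hb ∈ 𝒜) →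
      (𝒜 \ ⋃ b : Set.Iio a, Bad (g b.1 b.2)).Nonempty := by
    intro a g hg
    have hU : #(⋃ b : Set.Iio a, Bad (g b.1 b.2)) < lam := by
      refine (mk_iUnion_le _).trans_lt (mul_lt_of_lt hlreg.aleph0_le (mk_Iio_ord_toType a)
        (iSup_lt_of_isRegular hlreg (mk_Iio_ord_toType a) fun b => hBadlt _ (hg b.1 b.2)))
    by_contra hne
    rw [Set.not_nonempty_iff_eq_empty, Set.diff_eq_empty] at hne
    exact absurd ((mk_le_mk_of_subset hne).trans_lt hU) (by simp [hcard])
  let F : ∀ a : β, (∀ b, b < a → Set α) → Set α := fun a g =>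
    if h : (∀ b (hb : b < a), g b hb ∈ 𝒜) then (key a g h).some else ∅
  let f : β → Set α := fun a => (wellFounded_lt (α := β)).fix F a
  have hfeq : ∀ a, f a = F a fun b _ => f b := fun a => WellFounded.fix_eq _ _ a
  have hmem : ∀ a : β, f a ∈ 𝒜 \ ⋃ b : Set.Iio a, Bad (f b.1) := by
    intro a
    refine (wellFounded_lt (α := β)).induction (C := fun a => f a ∈ 𝒜 \ ⋃ b : Set.Iio a, Bad (f b.1)) a ?_
    intro a IH
    have hg : ∀ b (hb : b < a), f b ∈ 𝒜 := fun b hb => (IH b hb).1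
    have : f a = (key a (fun b _ => f b) hg).some := by
      rw [hfeq a]; exact dif_pos hg
    rw [this]
    exact (key a _ hg).some_mem
  have hfA : ∀ a, f a ∈ 𝒜 := fun a => (hmem a).1
  have hnotbad : ∀ {a b : β}, b < a → f a ∉ Bad (f b) := by
    intro a b hba hmemBad
    exact (hmem a).2 (Set.mem_iUnion.2 ⟨⟨b, hba⟩, hmemBad⟩)
  have hinj : Function.Injective f := by
    intro a b hab
    by_contra hne
    rcases Ne.lt_or_gt hne with h | h
    · exact hnotbad h (hab ▸ hself (f a) (hfA a))
    · exact hnotbad h (hab ▸ hself (f b) (hfA b))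
  refine ⟨Set.range f, ?_, ?_, ?_⟩
  · rintro A ⟨a, rfl⟩; exact hsize _ (hfA a)
  · rw [mk_range_eq f hinj, hβc]
  · rintro A ⟨a, rfl⟩ B ⟨b, rfl⟩ hne
    have hab : a ≠ b := fun h => hne (by rw [h])
    rcases hab.lt_or_gt with h | h
    · rw [← not_le]
      intro hle
      exact hnotbad h ⟨hfA b, hle⟩
    · rw [Set.inter_comm, ← not_le]
      intro hle
      exact hnotbad h ⟨hfA a, hle⟩
end

section
/- Suppose λ is the minimal cardinal such that there exists a graph with λ vertices, coloring number > θ, and list-chromatic number ≤ κ, where 2^κ ≤ θ ≤ λ and θ is regular. Then there exists a graph G with λ vertices such that: G has coloring number ≥ θ, every subgraph of G with fewer than λ vertices has coloring number ≤ θ, and the complete bipartite graph K(κ, 2^κ) does not weakly embed into G (i.e., there are no disjoint vertex sets X, Y in G with |X| = κ, |Y| = 2^κ, and every vertex of X adjacent to every vertex of Y). -/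
open Cardinal

universe u

/-- The coloring number of `G` is at most `ν`: some well-ordering of the vertices
has every vertex with fewer than `ν` earlier neighbors. -/
def ColAtMost {V : Type u} (G : SimpleGraph V) (ν : Cardinal.{u}) : Prop :=
  ∃ (r : V → V → Prop) (_ : IsWellOrder V r), ∀ v, #{u | G.Adj u v ∧ r u v} < ν

/-- The list-chromatic number of `G` is at most `ν`: any lists of size ≥ ν admit
a proper coloring from the lists. -/
def ListChromAtMost {V : Type u} (G : SimpleGraph V) (ν : Cardinal.{u}) : Prop :=
  ∀ (C : Type u) (L : V → Set C), (∀ v, ν ≤ #(L v)) →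
    ∃ c : V → C, (∀ v, c v ∈ L v) ∧ ∀ u v, G.Adj u v → c u ≠ c v

theorem stmt13 (κ θ lam : Cardinal.{u})
    (hκ : ℵ₀ ≤ κ) (h2κ : 2 ^ κ ≤ θ) (hθl : θ ≤ lam) (hθreg : θ.IsRegular)
    (hex : ∃ (V : Type u) (G : SimpleGraph V), #V = lam ∧
      ¬ ColAtMost G θ ∧ ListChromAtMost G κ)
    (hmin : ∀ lam' < lam, ¬ ∃ (V : Type u) (G : SimpleGraph V), #V = lam' ∧
      ¬ ColAtMost G θ ∧ ListChromAtMost G κ) :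
    ∃ (V : Type u) (G : SimpleGraph V), #V = lam ∧
      (∀ ν : Cardinal.{u}, ν < θ → ¬ ColAtMost G ν) ∧
      (∀ W : Set V, #W < lam → ColAtMost (G.induce W) θ) ∧
      ¬ ∃ (X Y : Set V), Disjoint X Y ∧ #X = κ ∧ #Y = 2 ^ κ ∧
          ∀ x ∈ X, ∀ y ∈ Y, G.Adj x y := by
  classical
  obtain ⟨V, G, hV, hncol, hlist⟩ := hex
  refine ⟨V, G, hV, ?_, ?_, ?_⟩
  · -- monotonicity: coloring number bounded by ν < θ would bound it by θ
    rintro ν hν ⟨r, wo, h⟩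
    exact hncol ⟨r, wo, fun v => (h v).trans_le hν.le⟩
  · -- small subgraphs have coloring number ≤ θ, by minimality of lam
    intro W hW
    by_contra hcol
    refine hmin _ hW ⟨↥W, G.induce W, rfl, hcol, ?_⟩
    intro C L hL
    rcases isEmpty_or_nonempty ↥W with hE | hNE
    · exact ⟨fun w => isEmptyElim w, fun v => isEmptyElim v, fun u v _ => isEmptyElim u⟩
    · obtain ⟨w0⟩ := hNE
      have hC : κ ≤ #C := (hL w0).trans (Cardinal.mk_set_le _)
      obtain ⟨c, hc1, hc2⟩ :=
        hlist C (fun v => if h : v ∈ W then L ⟨v, h⟩ else Set.univ) (by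
          intro v
          by_cases h : v ∈ W
          · simpa [dif_pos h] using hL ⟨v, h⟩
          · simpa [dif_neg h, Cardinal.mk_univ] using hC)
      refine ⟨fun w => c ↑w, fun w => ?_, fun u v huv => ?_⟩
      · have := hc1 ↑w
        simpa [dif_pos w.2] using this
      · exact hc2 _ _ huv
  · -- no weak embedding of K(κ, 2^κ)
    rintro ⟨X, Y, hdisj, hX, hY, hadj⟩
    have hYX : #↥Y = #(↥X → ↥X) := by
      rw [hY, ← Cardinal.power_def, hX, Cardinal.power_self_eq hκ]
    obtain ⟨e⟩ := Cardinal.eq.mp hYX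
    set L : V → Set (↥X × ↥X) := fun v =>
      if h : v ∈ X then {p | p.1 = ⟨v, h⟩}
      else if h : v ∈ Y then Set.range (fun x => (x, e ⟨v, h⟩ x))
      else Set.univ with hLdef
    obtain ⟨c, hc1, hc2⟩ := hlist (↥X × ↥X) L (by
      intro v
      by_cases h : v ∈ X
      · rw [hLdef]
        simp only [dif_pos h]
        rw [← hX]
        exact Cardinal.mk_le_of_injective
          (f := fun t : ↥X => (⟨(⟨v, h⟩, t), rfl⟩ : {p : ↥X × ↥X // p.1 = ⟨v, h⟩}))
          (by intro a b hab; exact congrArg (fun s => s.1.2) hab)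
      · by_cases h' : v ∈ Y
        · rw [hLdef]
          simp only [dif_neg h, dif_pos h']
          rw [Cardinal.mk_range_eq _ (by intro a b hab; exact congrArg Prod.fst hab), hX]
        · rw [hLdef]
          simp only [dif_neg h, dif_neg h']
          rw [Cardinal.mk_univ, Cardinal.mk_prod, Cardinal.lift_id, hX,
            Cardinal.mul_eq_self hκ])
    set g : ↥X → ↥X := fun x => (c ↑x).2 with hg
    have hcx : ∀ x : ↥X, c ↑x = (x, g x) := by
      intro x
      have := hc1 ↑x
      rw [hLdef] at this
      simp only [dif_pos x.2, Set.mem_setOf_eq, Subtype.coe_eta] at this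
      exact Prod.ext this rfl
    set y : ↥Y := e.symm g with hy
    have hyY : (y : V) ∈ Y := y.2
    have hyX : (y : V) ∉ X := fun hmem => hdisj.le_bot ⟨hmem, hyY⟩ |>.elim
    have := hc1 ↑y
    rw [hLdef] at this
    simp only [dif_neg hyX, dif_pos hyY, Subtype.coe_eta] at this
    obtain ⟨x0, hx0⟩ := this
    have hEy : e y = g := by rw [hy]; exact e.apply_symm_apply g
    have hcy : c ↑y = (x0, g x0) := by rw [← hx0, hEy]
    exact hc2 ↑x0 ↑y (hadj ↑x0 x0.2 ↑y hyY) (by rw [hcx x0, hcy])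
end

section
/- Suppose κ ≤ μ < χ < λ with λ regular, χ a limit cardinal of cofinality different from cf(μ), and there exists a κ-family A ⊆ [χ]^μ of cardinality λ. Then for every sufficiently large cardinal χ₁ < χ there exists a κ-family A' ⊆ [χ₁]^μ of cardinality λ. -/
open Cardinal

universe u

lemma key_aux {α : Type u} {μ χ : Cardinal.{u}} (hμ : ℵ₀ ≤ μ) (hμχ : μ < χ)
    (hχlim : Order.IsSuccLimit χ) (hcof : χ.ord.cof ≠ μ.ord.cof)
    (rk : α → Ordinal.{u}) (hrk : ∀ x, rk x < χ.ord)
    (A : Set α) (hA : #A = μ) :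
    ∃ c < χ, #↥(A ∩ {x | rk x < c.ord}) = μ := by
  have hχ : ℵ₀ ≤ χ := hμ.trans hμχ.le
  have hχord : Order.IsSuccLimit (χ.ord) := Cardinal.isSuccLimit_ord hχ
  have hcof0 : ℵ₀ ≤ χ.ord.cof := Ordinal.aleph0_le_cof.2 hχord
  by_contra hcon
  push_neg at hcon
  have hlt' : ∀ c, c < χ → #↥(A ∩ {x | rk x < c.ord}) < μ := by
    intro c hc
    refine lt_of_le_of_ne ?_ (hcon c hc)
    rw [← hA]; exact mk_le_mk_of_subset Set.inter_subset_left
  have hmono : ∀ {c c' : Cardinal.{u}}, c ≤ c' →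
      (A ∩ {x | rk x < c.ord}) ⊆ (A ∩ {x | rk x < c'.ord}) := by
    intro c c' h
    exact Set.inter_subset_inter_right _
      (fun x hx => lt_of_lt_of_le hx (Cardinal.ord_le_ord.2 h))
  rcases lt_trichotomy χ.ord.cof μ with hlt | heq | hgt
  · -- cof χ < μ
    have hℵμ : ℵ₀ < μ := lt_of_le_of_lt hcof0 hlt
    obtain ⟨ι, f, hlsub, hmkι⟩ := Ordinal.exists_lsub_cof χ.ord
    haveI hι : Nonempty ι := by
      rw [← Cardinal.mk_ne_zero_iff, hmkι]
      exact ne_of_gt (lt_of_lt_of_le aleph0_pos hcof0)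
    set c : ι → Cardinal.{u} := fun i => Order.succ (f i).card with hc
    have hci : ∀ i, c i < χ := by
      intro i
      exact hχlim.succ_lt ((Cardinal.lt_ord).1 (hlsub ▸ Ordinal.lt_lsub f i))
    set g : ι → Cardinal.{u} := fun i => #↥(A ∩ {x | rk x < (c i).ord}) with hgdef
    have hg : ∀ i, g i < μ := fun i => hlt' _ (hci i)
    have cover : A ⊆ ⋃ i, (A ∩ {x | rk x < (c i).ord}) := by
      intro x hx
      have hx2 : rk x < Ordinal.lsub f := hlsub ▸ hrk x
      obtain ⟨i, hi⟩ := Ordinal.lt_lsub_iff.1 hx2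
      exact Set.mem_iUnion.2 ⟨i, hx, (Cardinal.lt_ord).2
        (lt_of_le_of_lt (Ordinal.card_le_card hi) (Order.lt_succ _))⟩
    have hsup : μ ≤ #ι * ⨆ i, g i := by
      calc μ = #A := hA.symm
      _ ≤ #↥(⋃ i, (A ∩ {x | rk x < (c i).ord})) := mk_le_mk_of_subset cover
      _ ≤ #ι * ⨆ i, g i := Cardinal.mk_iUnion_le _
    have hssup : (⨆ i, g i) = μ := by
      refine le_antisymm (ciSup_le' fun i => (hg i).le) ?_
      by_contra hns
      push_neg at hns
      have hsmall : #ι * ⨆ i, g i < μ := by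
        apply lt_of_le_of_lt (Cardinal.mul_le_max _ _)
        simp only [max_lt_iff]
        exact ⟨⟨hmkι ▸ hlt, hns⟩, hℵμ⟩
      exact absurd hsup (not_le.2 hsmall)
    have P : ∀ d, d < μ → ∃ i, d < g i := by
      intro d hd
      rw [← hssup] at hd
      exact (lt_ciSup_iff (Cardinal.bddAbove_range g)).1 hd
    have h1 : μ.ord.cof ≤ χ.ord.cof := by
      have hlsubF : Ordinal.lsub (fun i => (g i).ord) = μ.ord := by
        apply le_antisymm
        · exact Ordinal.lsub_le fun i => Cardinal.ord_lt_ord.2 (hg i)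
        · by_contra hns
          push_neg at hns
          obtain ⟨i, hi⟩ := P _ ((Cardinal.lt_ord).1 hns)
          have h3 := Ordinal.lt_lsub (fun i => (g i).ord) i
          have h4 : g i ≤ (Ordinal.lsub fun i => (g i).ord).card := by
            simpa using Ordinal.card_le_card h3.le
          exact absurd hi (not_lt.2 h4)
      calc μ.ord.cof = (Ordinal.lsub fun i => (g i).ord).cof := by rw [hlsubF]
      _ ≤ #ι := Ordinal.cof_lsub_le _
      _ = χ.ord.cof := hmkι
    have h2 : χ.ord.cof ≤ μ.ord.cof := by
      obtain ⟨ι', f', hlsub', hmkι'⟩ := Ordinal.exists_lsub_cof μ.ord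
      have hsel : ∀ j : ι', ∃ i, (f' j).card < g i := fun j =>
        P _ ((Cardinal.lt_ord).1 (hlsub' ▸ Ordinal.lt_lsub f' j))
      choose sel hsel using hsel
      have hlsubG : Ordinal.lsub (fun j => (c (sel j)).ord) = χ.ord := by
        apply le_antisymm
        · exact Ordinal.lsub_le fun j => Cardinal.ord_lt_ord.2 (hci _)
        · by_contra hns
          push_neg at hns
          set o := Ordinal.lsub (fun j => (c (sel j)).ord) with ho
          have hc₀ : Order.succ o.card < χ := hχlim.succ_lt ((Cardinal.lt_ord).1 hns)
          have hd : #↥(A ∩ {x | rk x < (Order.succ o.card).ord}) < μ := hlt' _ hc₀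
          obtain ⟨j, hj⟩ := Ordinal.lt_lsub_iff.1 (hlsub' ▸ (Cardinal.ord_lt_ord.2 hd))
          have hdle : #↥(A ∩ {x | rk x < (Order.succ o.card).ord}) ≤ (f' j).card := by
            simpa using Ordinal.card_le_card hj
          have hstep : Order.succ o.card < c (sel j) := by
            by_contra hle
            push_neg at hle
            exact absurd (lt_of_le_of_lt hdle (hsel j))
              (not_lt.2 (mk_le_mk_of_subset (hmono hle)))
          have hfin : o < (c (sel j)).ord :=
            (Cardinal.lt_ord).2 (lt_trans (Order.lt_succ _) hstep)
          exact absurd (Ordinal.lt_lsub (fun j => (c (sel j)).ord) j) (not_lt.2 hfin.le)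
      calc χ.ord.cof = (Ordinal.lsub fun j => (c (sel j)).ord).cof := by rw [hlsubG]
      _ ≤ #ι' := Ordinal.cof_lsub_le _
      _ = μ.ord.cof := hmkι'
    exact hcof (le_antisymm h2 h1)
  · exact hcof (by rw [← heq, Ordinal.cof_cof])
  · -- μ < cof χ
    set o₀ := ⨆ a : ↥A, rk a with ho₀
    have ho₀lt : o₀ < χ.ord := by
      apply Ordinal.iSup_lt_ord _ (fun a : ↥A => hrk _)
      rw [hA]; exact hgt
    have hcχ : Order.succ o₀.card < χ := hχlim.succ_lt ((Cardinal.lt_ord).1 ho₀lt)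
    have hsub : A ⊆ {x | rk x < (Order.succ o₀.card).ord} := by
      intro x hx
      have h1 : rk x ≤ o₀ := le_ciSup (Ordinal.bddAbove_range _) (⟨x, hx⟩ : ↥A)
      exact (Cardinal.lt_ord).2 (lt_of_le_of_lt (Ordinal.card_le_card h1) (Order.lt_succ _))
    have heqA : A ∩ {x | rk x < (Order.succ o₀.card).ord} = A := Set.inter_eq_left.2 hsub
    exact hcon _ hcχ (by rw [heqA, hA])

theorem stmt16 {α : Type u} (κ μ χ lam : Cardinal.{u})
    (hκ : ℵ₀ ≤ κ) (hκμ : κ ≤ μ) (hμχ : μ < χ) (hχl : χ < lam)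
    (hlreg : lam.IsRegular) (hχlim : Order.IsSuccLimit χ) (hcof : χ.ord.cof ≠ μ.ord.cof)
    (hα : #α = χ)
    (𝒜 : Set (Set α)) (hsize : ∀ A ∈ 𝒜, #A = μ) (hfam : KappaFamily κ 𝒜)
    (hcard : #𝒜 = lam) :
    ∃ χ₀ < χ, ∀ χ₁ : Cardinal.{u}, χ₀ ≤ χ₁ → χ₁ < χ →
      ∃ (β : Type u), #β = χ₁ ∧ ∃ 𝒜' : Set (Set β),
        (∀ A ∈ 𝒜', #A = μ) ∧ KappaFamily κ 𝒜' ∧ #𝒜' = lam := by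
  classical
  haveI : IsWellOrder χ.ord.ToType (· < ·) := isWellOrder_lt
  obtain ⟨e⟩ : Nonempty (α ≃ χ.ord.ToType) :=
    Cardinal.eq.mp (by rw [Cardinal.mk_toType, Cardinal.card_ord]; exact hα)
  set rk : α → Ordinal.{u} := fun x => Ordinal.typein ((· < ·) : χ.ord.ToType → χ.ord.ToType → Prop) (e x)
    with hrkdef
  have hrk : ∀ x, rk x < χ.ord := fun x => Ordinal.typein_lt_self (e x)
  set S : Cardinal.{u} → Set α := fun c => {x | rk x < c.ord} with hSdef
  have mkS : ∀ c, c < χ → #↥(S c) = c := by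
    intro c hc
    have h1 : c.ord < Ordinal.type (α := χ.ord.ToType) (· < ·) := by
      rw [Ordinal.type_toType]; exact Cardinal.ord_lt_ord.2 hc
    obtain ⟨b₀, hb₀⟩ := Ordinal.typein_surj ((· < ·) : χ.ord.ToType → χ.ord.ToType → Prop) h1
    have hSc : S c = e ⁻¹' {b | b < b₀} := by
      ext x
      simp only [hSdef, Set.mem_setOf_eq, Set.mem_preimage, hrkdef]
      rw [← hb₀]
      exact Ordinal.typein_lt_typein _
    rw [hSc, Cardinal.mk_preimage_of_injective_of_subset_range _ _ e.injective
      (by rw [Equiv.range_eq_univ]; exact Set.subset_univ _)]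
    have hct : #↥{b | b < b₀} =
        (Ordinal.typein ((· < ·) : χ.ord.ToType → χ.ord.ToType → Prop) b₀).card :=
      Ordinal.card_typein (r := ((· < ·) : χ.ord.ToType → χ.ord.ToType → Prop)) b₀
    rw [hct, hb₀, Cardinal.card_ord]
  have hkey : ∀ A : ↥𝒜, ∃ c < χ, #↥((A : Set α) ∩ S c) = μ := fun A =>
    key_aux (hκ.trans hκμ) hμχ hχlim hcof rk hrk A (hsize A A.2)
  choose cA hcA1 hcA2 using hkey
  set F : ↥𝒜 → χ.ord.ToType := fun A => Ordinal.enum ((· < ·) : χ.ord.ToType → χ.ord.ToType → Prop)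
      ⟨(cA A).ord, by rw [Ordinal.type_toType]; exact Cardinal.ord_lt_ord.2 (hcA1 A)⟩ with hFdef
  have hFinj : ∀ A B, F A = F B → cA A = cA B := by
    intro A B h
    have h2 := (Ordinal.enum
      ((· < ·) : χ.ord.ToType → χ.ord.ToType → Prop)).toEquiv.injective h
    have h3 := congrArg Subtype.val h2
    exact Cardinal.ord_injective h3
  have hχtoType : #(χ.ord.ToType) = χ := by rw [Cardinal.mk_toType, Cardinal.card_ord]
  have hfiber : ∃ b : χ.ord.ToType, #↥(F ⁻¹' {b}) = lam := by
    by_contra hno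
    push_neg at hno
    have hltb : ∀ b, #↥(F ⁻¹' {b}) < lam := by
      intro b
      refine lt_of_le_of_ne ?_ (hno b)
      calc #↥(F ⁻¹' {b}) ≤ #↥𝒜 := Cardinal.mk_set_le _
      _ = lam := hcard
    have hsum : #↥𝒜 = Cardinal.sum (fun b => #↥(F ⁻¹' {b})) := by
      rw [← Cardinal.mk_sigma]
      exact Cardinal.mk_congr (Equiv.sigmaFiberEquiv F).symm
    have hslt : Cardinal.sum (fun b => #↥(F ⁻¹' {b})) < lam :=
      Cardinal.sum_lt_of_isRegular hlreg (by rw [hχtoType]; exact hχl) hltb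
    rw [hcard] at hsum
    exact absurd hsum.symm (ne_of_lt hslt)
  obtain ⟨b₀, hb₀⟩ := hfiber
  have hneB : (F ⁻¹' {b₀}).Nonempty := by
    rw [← Set.nonempty_coe_sort, ← Cardinal.mk_ne_zero_iff, hb₀]
    exact hlreg.pos.ne'
  obtain ⟨A₀, hA₀⟩ := hneB
  refine ⟨cA A₀, hcA1 A₀, ?_⟩
  intro χ₁ h1 h2
  refine ⟨↥(S χ₁), mkS χ₁ h2, ?_⟩
  have hsame : ∀ A ∈ F ⁻¹' {b₀}, cA A = cA A₀ := fun A hA =>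
    hFinj A A₀ (hA.trans (Set.mem_singleton_iff.1 hA₀).symm ▸ rfl)
  set Φ : ↥𝒜 → Set ↥(S χ₁) := fun A => (Subtype.val) ⁻¹' (A : Set α) with hΦdef
  have hμA : ∀ A ∈ F ⁻¹' {b₀}, #↥((A : Set α) ∩ S χ₁) = μ := by
    intro A hA
    apply le_antisymm
    · rw [← hsize A A.2]; exact mk_le_mk_of_subset Set.inter_subset_left
    · rw [← hcA2 A]
      apply mk_le_mk_of_subset
      apply Set.inter_subset_inter_right
      intro x hx
      have hx' : rk x < (cA A).ord := hx
      show rk x < χ₁.ord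
      exact lt_of_lt_of_le hx' (Cardinal.ord_le_ord.2 ((hsame A hA).le.trans h1))
  have hΦcard : ∀ A ∈ F ⁻¹' {b₀}, #↥(Φ A) = μ := by
    intro A hA
    have hh : Φ A = (Subtype.val : ↥(S χ₁) → α) ⁻¹' ((A : Set α) ∩ S χ₁) := by
      ext x
      simp only [hΦdef, Set.mem_preimage, Set.mem_inter_iff, iff_self_and]
      exact fun _ => x.2
    rw [hh, Cardinal.mk_preimage_of_injective_of_subset_range _ _ Subtype.val_injective
      (by rw [Subtype.range_coe]; exact Set.inter_subset_right)]
    exact hμA A hA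
  have hval : ∀ A : ↥𝒜, (Subtype.val : ↥(S χ₁) → α) '' (Φ A) = (A : Set α) ∩ S χ₁ := by
    intro A
    rw [hΦdef]
    simp only []
    rw [Set.image_preimage_eq_inter_range, Subtype.range_coe]
  have hΦinj : Set.InjOn Φ (F ⁻¹' {b₀}) := by
    intro A hA B hB h
    have hAB : (A : Set α) ∩ S χ₁ = (B : Set α) ∩ S χ₁ := by
      rw [← hval A, ← hval B, h]
    by_contra hne
    have hABne : (A : Set α) ≠ (B : Set α) := fun hh => hne (Subtype.ext hh)
    have hsmall := hfam A A.2 B B.2 hABne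
    have hbig : μ ≤ #↥((A : Set α) ∩ (B : Set α)) := by
      rw [← hμA A hA]
      apply mk_le_mk_of_subset
      intro x hx
      exact ⟨hx.1, (hAB ▸ hx : x ∈ (B : Set α) ∩ S χ₁).1⟩
    exact absurd hsmall (not_lt.2 (hκμ.trans hbig))
  refine ⟨Φ '' (F ⁻¹' {b₀}), ?_, ?_, ?_⟩
  · rintro s ⟨A, hA, rfl⟩
    exact hΦcard A hA
  · rintro s ⟨A, hA, rfl⟩ t ⟨B, hB, rfl⟩ hst
    have hABne : (A : Set α) ≠ (B : Set α) := by
      intro hh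
      apply hst
      simp only [hΦdef, hh]
    have hsmall := hfam A A.2 B B.2 hABne
    have hsub : #↥(Φ A ∩ Φ B) ≤ #↥((A : Set α) ∩ (B : Set α)) := by
      have : Φ A ∩ Φ B = (Subtype.val : ↥(S χ₁) → α) ⁻¹' ((A : Set α) ∩ (B : Set α)) := by
        rw [hΦdef, Set.preimage_inter]
      rw [this]
      exact Cardinal.mk_preimage_of_injective _ _ Subtype.val_injective
    exact lt_of_le_of_lt hsub hsmall
  · rw [Cardinal.mk_image_eq_of_injOn _ _ hΦinj, hb₀]
end
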